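/- arXiv:0706.3381 — 9 statements merged into one kernel-verified Lean document; each statement's English description precedes it below -/
import Mathlib

section
/- Let A ⊆ B and B ⊆ C be integral ring extensions with d_A(B) and d_B(C) finite, where d denotes the supremum of integral degrees of elements. Then A ⊆ C is integral and d_A(C) ≤ d_A(B)^{d_B(C)} · d_B(C). -/
open Polynomial in
lemma aux_charpoly {R M ι : Type*} [CommRing R] [AddCommGroup M] [Module R M]
    [Fintype ι] [DecidableEq ι] [Nontrivial R] (b : ι → M)
    (hb : Submodule.span R (Set.range b) = ⊤) (f : Module.End R M) :
    ∃ p : R[X], p.Monic ∧ p.natDegree = Fintype.card ι ∧ Polynomial.aeval f p = 0 := by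
  obtain ⟨A, H⟩ := Matrix.isRepresentation.toEnd_surjective R b hb f
  refine ⟨A.1.charpoly, A.1.charpoly_monic, A.1.charpoly_natDegree_eq_dim, ?_⟩
  rw [← H, Polynomial.aeval_algHom_apply, ← map_zero (Matrix.isRepresentation.toEnd R b hb)]
  congr 1
  ext1
  rw [Polynomial.aeval_subalgebra_coe, Matrix.aeval_self_charpoly, Subalgebra.coe_zero]

open Polynomial in
lemma aux_pad {R S : Type*} [CommRing R] [CommRing S] [Algebra R S] [Nontrivial R]
    {x : S} {p : R[X]} {n : ℕ} (hm : p.Monic) (hd : p.natDegree ≤ n)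
    (h0 : Polynomial.aeval x p = 0) :
    ∃ q : R[X], q.Monic ∧ q.natDegree = n ∧ Polynomial.aeval x q = 0 := by
  refine ⟨p * X ^ (n - p.natDegree), hm.mul (monic_X_pow _), ?_, by simp [h0]⟩
  rw [hm.natDegree_mul (monic_X_pow _), natDegree_X_pow]
  omega

lemma aux_pow_mem {A C : Type*} [CommRing A] [CommRing C] [Algebra A C]
    (x : C) (n : ℕ) (hn : 0 < n)
    (hx : x ^ n ∈ Submodule.span A (Set.range fun i : Fin n => x ^ (i : ℕ))) :
    ∀ k, x ^ k ∈ Submodule.span A (Set.range fun i : Fin n => x ^ (i : ℕ)) := by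
  set P := Submodule.span A (Set.range fun i : Fin n => x ^ (i : ℕ)) with hP
  have hmul : ∀ y ∈ P, x * y ∈ P := by
    intro y hy
    induction hy using Submodule.span_induction with
    | mem y hy =>
      obtain ⟨i, rfl⟩ := hy
      rcases lt_or_ge ((i : ℕ) + 1) n with h | h
      · exact Submodule.subset_span ⟨⟨(i : ℕ) + 1, h⟩, by rw [← pow_succ']⟩
      · have : (i : ℕ) + 1 = n := le_antisymm (Nat.succ_le_of_lt i.2) h
        rw [← pow_succ', this]; exact hx
    | zero => simp
    | add a b _ _ ha hb => rw [mul_add]; exact add_mem ha hb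
    | smul a y _ hy => rw [mul_smul_comm]; exact Submodule.smul_mem _ _ hy
  intro k
  induction k with
  | zero => exact Submodule.subset_span ⟨⟨0, hn⟩, by simp⟩
  | succ k ih => rw [pow_succ']; exact hmul _ ih

lemma aux_prod_mem {A C : Type*} [CommRing A] [CommRing C] [Algebra A C]
    {d n : ℕ} (hn : 0 < n) (β : Fin d → C)
    (hβ : ∀ j, (β j) ^ n ∈ Submodule.span A (Set.range fun i : Fin n => (β j) ^ (i : ℕ)))
    (f : Fin d → ℕ) :
    (∏ j, β j ^ f j) ∈
      Submodule.span A (Set.range fun e : Fin d → Fin n => ∏ j, β j ^ ((e j : ℕ))) := by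
  classical
  suffices H : ∀ t : Finset (Fin d), (∏ j ∈ t, β j ^ f j) ∈
      Submodule.span A (Set.range fun e : Fin d → Fin n => ∏ j ∈ t, β j ^ ((e j : ℕ))) from
    H Finset.univ
  intro t
  induction t using Finset.induction with
  | empty => exact Submodule.subset_span ⟨fun _ => ⟨0, hn⟩, by simp⟩
  | @insert j t hj ih =>
    rw [Finset.prod_insert hj]
    have h1 : β j ^ f j ∈ Submodule.span A (Set.range fun i : Fin n => (β j) ^ (i : ℕ)) :=
      aux_pow_mem (β j) n hn (hβ j) (f j)
    have h2 := Submodule.mul_mem_mul h1 ih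
    rw [Submodule.span_mul_span] at h2
    refine Submodule.span_le.2 ?_ h2
    rintro z ⟨a, ⟨i, rfl⟩, b, ⟨e, rfl⟩, rfl⟩
    refine Submodule.subset_span ⟨Function.update e j i, ?_⟩
    show ∏ j' ∈ insert j t, β j' ^ ((Function.update e j i j' : ℕ)) = _
    rw [Finset.prod_insert hj, Function.update_self]
    congr 1
    refine Finset.prod_congr rfl fun j' hj' => ?_
    have : j' ≠ j := fun h => hj (h ▸ hj')
    rw [Function.update_of_ne this]


open Pointwise in
/-- For integral extensions `A ⊆ B ⊆ C` with integral degrees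
`d_A(B) ≤ dAB` and `d_B(C) ≤ dBC`, the extension `A ⊆ C` is integral and
`d_A(C) ≤ dAB ^ dBC * dBC`. -/
theorem stmt4 {A B C : Type*} [CommRing A] [CommRing B] [CommRing C]
    [Algebra A B] [Algebra B C] [Algebra A C] [IsScalarTower A B C]
    (hinjAB : Function.Injective (algebraMap A B))
    (hinjBC : Function.Injective (algebraMap B C))
    (hAB : Algebra.IsIntegral A B) (hBC : Algebra.IsIntegral B C) (dAB dBC : ℕ)
    (hdAB : ∀ b : B, ∃ p : Polynomial A, p.Monic ∧ p.natDegree ≤ dAB ∧ Polynomial.aeval b p = 0)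
    (hdBC : ∀ c : C, ∃ p : Polynomial B, p.Monic ∧ p.natDegree ≤ dBC ∧ Polynomial.aeval c p = 0) :
    Algebra.IsIntegral A C ∧
      ∀ c : C, ∃ p : Polynomial A, p.Monic ∧ p.natDegree ≤ dAB ^ dBC * dBC ∧
        Polynomial.aeval c p = 0 := by
  classical
  have key : ∀ c : C, ∃ p : Polynomial A, p.Monic ∧ p.natDegree ≤ dAB ^ dBC * dBC ∧
      Polynomial.aeval c p = 0 := by
    by_cases hC : (1 : C) = 0
    · have : Subsingleton C := subsingleton_of_zero_eq_one hC.symm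
      intro c
      exact ⟨1, Polynomial.monic_one, by simp, Subsingleton.elim _ _⟩
    have hCn : Nontrivial C := nontrivial_of_ne 1 0 hC
    have hBn : Nontrivial B := by
      refine nontrivial_of_ne 1 0 fun h => hC ?_
      rw [← (algebraMap B C).map_one, h, map_zero]
    have hAn : Nontrivial A := by
      refine nontrivial_of_ne 1 0 fun h => ?_
      have : (1 : B) = 0 := by rw [← (algebraMap A B).map_one, h, map_zero]
      exact one_ne_zero this
    have hdAB1 : 0 < dAB := by
      rcases Nat.eq_zero_or_pos dAB with h | h
      · obtain ⟨p, hm, hd, h0⟩ := hdAB 1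
        rw [h, Nat.le_zero] at hd
        rw [(hm.natDegree_eq_zero).mp hd] at h0
        simp at h0
      · exact h
    have hdBC1 : 0 < dBC := by
      rcases Nat.eq_zero_or_pos dBC with h | h
      · obtain ⟨p, hm, hd, h0⟩ := hdBC 0
        rw [h, Nat.le_zero] at hd
        rw [(hm.natDegree_eq_zero).mp hd] at h0
        simp at h0
      · exact h
    intro c
    -- pad the polynomial of `c` over `B` to degree exactly `dBC`
    obtain ⟨q₀, hq₀m, hq₀d, hq₀0⟩ := hdBC c
    obtain ⟨q, hqm, hqd, hq0⟩ := aux_pad hq₀m hq₀d hq₀0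
    set β : Fin dBC → C := fun j => algebraMap B C (q.coeff (j : ℕ)) with hβdef
    -- the relation for c
    have hcrel : c ^ dBC = ∑ i ∈ Finset.range dBC, -(algebraMap B C (q.coeff i)) * c ^ i := by
      have h := hq0
      rw [Polynomial.aeval_eq_sum_range, hqd, Finset.sum_range_succ] at h
      have hlc : q.coeff dBC = 1 := by
        have := hqm.coeff_natDegree; rwa [hqd] at this
      rw [hlc, one_smul] at h
      have : c ^ dBC = -∑ i ∈ Finset.range dBC, q.coeff i • c ^ i := by
        linear_combination h
      rw [this, ← Finset.sum_neg_distrib]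
      refine Finset.sum_congr rfl fun i _ => ?_
      rw [Algebra.smul_def]; ring
    -- the relations for the β j
    have hβ : ∀ j : Fin dBC, (β j) ^ dAB ∈
        Submodule.span A (Set.range fun i : Fin dAB => (β j) ^ (i : ℕ)) := by
      intro j
      obtain ⟨r₀, hr₀m, hr₀d, hr₀0⟩ := hdAB (q.coeff (j : ℕ))
      obtain ⟨r, hrm, hrd, hr0⟩ := aux_pad hr₀m hr₀d hr₀0
      have h0 : Polynomial.aeval (β j) r = 0 := by
        rw [hβdef]
        rw [Polynomial.aeval_algebraMap_apply, hr0, map_zero]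
      rw [Polynomial.aeval_eq_sum_range, hrd, Finset.sum_range_succ] at h0
      have hlc : r.coeff dAB = 1 := by
        have := hrm.coeff_natDegree; rwa [hrd] at this
      rw [hlc, one_smul] at h0
      have he : (β j) ^ dAB = -∑ i ∈ Finset.range dAB, r.coeff i • (β j) ^ i := by
        linear_combination h0
      rw [he]
      refine neg_mem (Submodule.sum_mem _ fun i hi => Submodule.smul_mem _ _ ?_)
      exact Submodule.subset_span ⟨⟨i, Finset.mem_range.mp hi⟩, rfl⟩
    set Mb : Submodule A C :=
      Submodule.span A (Set.range fun e : Fin dBC → Fin dAB => ∏ j, β j ^ ((e j : ℕ))) with hMb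
    set Pc : Submodule A C :=
      Submodule.span A (Set.range fun j : Fin dBC => c ^ (j : ℕ)) with hPc
    set M : Submodule A C := Mb * Pc with hM
    have h1Mb : (1 : C) ∈ Mb :=
      Submodule.subset_span ⟨fun _ => ⟨0, hdAB1⟩, by simp⟩
    have h1Pc : (1 : C) ∈ Pc := Submodule.subset_span ⟨⟨0, hdBC1⟩, by simp⟩
    have h1M : (1 : C) ∈ M := by
      simpa using Submodule.mul_mem_mul h1Mb h1Pc
    -- Mb is stable under multiplication by each β i
    have hβMb : ∀ (i : Fin dBC) (y : C), y ∈ Mb → β i * y ∈ Mb := by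
      intro i y hy
      induction hy using Submodule.span_induction with
      | mem y hy =>
        obtain ⟨e, rfl⟩ := hy
        have heq : β i * ∏ j, β j ^ ((e j : ℕ)) =
            ∏ j, β j ^ (((e j : ℕ)) + if j = i then 1 else 0) := by
          simp_rw [pow_add]
          rw [Finset.prod_mul_distrib]
          have : ∏ j, β j ^ (if j = i then 1 else 0) = β i := by
            rw [show (∏ j, β j ^ (if j = i then 1 else 0)) =
                ∏ j, (if j = i then β j else 1) from
              Finset.prod_congr rfl fun j _ => by split <;> simp]
            simp [Finset.prod_ite_eq']
          rw [this]; ring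
        rw [heq]
        exact aux_prod_mem hdAB1 β hβ _
      | zero => simp
      | add a b _ _ ha hb => rw [mul_add]; exact add_mem ha hb
      | smul a y _ hy => rw [mul_smul_comm]; exact Submodule.smul_mem _ _ hy
    -- M is stable under multiplication by c
    have hcM : ∀ z : C, z ∈ M → c * z ∈ M := by
      have hMspan : M = Submodule.span A
          ((Set.range fun e : Fin dBC → Fin dAB => ∏ j, β j ^ ((e j : ℕ))) *
            (Set.range fun j : Fin dBC => c ^ (j : ℕ))) := by
        rw [hM, hMb, hPc, Submodule.span_mul_span]
      intro z hz
      rw [hMspan] at hz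
      induction hz using Submodule.span_induction with
      | mem z hz =>
        obtain ⟨x, ⟨e, rfl⟩, y, ⟨j, rfl⟩, rfl⟩ := hz
        rw [show c * ((∏ j', β j' ^ ((e j' : ℕ))) * c ^ (j : ℕ)) =
            (∏ j', β j' ^ ((e j' : ℕ))) * c ^ ((j : ℕ) + 1) by ring]
        rcases lt_or_ge ((j : ℕ) + 1) dBC with h | h
        · exact Submodule.mul_mem_mul (Submodule.subset_span ⟨e, rfl⟩)
            (Submodule.subset_span ⟨⟨(j : ℕ) + 1, h⟩, rfl⟩)
        · have hj1 : (j : ℕ) + 1 = dBC := le_antisymm (Nat.succ_le_of_lt j.2) h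
          rw [hj1, hcrel, Finset.mul_sum]
          refine Submodule.sum_mem _ fun i hi => ?_
          rw [show (∏ j', β j' ^ ((e j' : ℕ))) * (-(algebraMap B C (q.coeff i)) * c ^ i) =
              -((β ⟨i, Finset.mem_range.mp hi⟩ * ∏ j', β j' ^ ((e j' : ℕ))) * c ^ i) by
            rw [hβdef]; ring]
          refine neg_mem (Submodule.mul_mem_mul
            (hβMb _ _ (Submodule.subset_span ⟨e, rfl⟩))
            (Submodule.subset_span ⟨⟨i, Finset.mem_range.mp hi⟩, rfl⟩))
      | zero => simp
      | add a b _ _ ha hb => rw [mul_add]; exact add_mem ha hb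
      | smul a y _ hy => rw [mul_smul_comm]; exact Submodule.smul_mem _ _ hy
    -- the finite spanning family of M
    set bb : ((Fin dBC → Fin dAB) × Fin dBC) → M := fun ej =>
      ⟨(∏ j, β j ^ ((ej.1 j : ℕ))) * c ^ ((ej.2 : ℕ)),
        Submodule.mul_mem_mul (Submodule.subset_span ⟨ej.1, rfl⟩)
          (Submodule.subset_span ⟨ej.2, rfl⟩)⟩ with hbbdef
    have hbb : Submodule.span A (Set.range bb) = ⊤ := by
      apply Submodule.map_injective_of_injective M.injective_subtype
      rw [Submodule.map_span, Submodule.map_top, Submodule.range_subtype]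
      have hset : M.subtype '' Set.range bb =
          (Set.range fun e : Fin dBC → Fin dAB => ∏ j, β j ^ ((e j : ℕ))) *
            (Set.range fun j : Fin dBC => c ^ (j : ℕ)) := by
        ext z
        constructor
        · rintro ⟨-, ⟨ej, rfl⟩, rfl⟩
          exact Set.mul_mem_mul ⟨ej.1, rfl⟩ ⟨ej.2, rfl⟩
        · rintro ⟨x, ⟨e, rfl⟩, y, ⟨j, rfl⟩, rfl⟩
          exact ⟨bb (e, j), ⟨(e, j), rfl⟩, rfl⟩
      rw [hset, hM, hMb, hPc, Submodule.span_mul_span]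
    -- multiplication by c as an endomorphism of M
    set f : Module.End A M := (LinearMap.mulLeft A c).restrict (fun x hx => hcM x hx) with hf
    have hfapp : ∀ x : M, ((f x : M) : C) = c * (x : C) := fun x => rfl
    obtain ⟨p, hpm, hpd, hp0⟩ := aux_charpoly bb hbb f
    have hcard : Fintype.card ((Fin dBC → Fin dAB) × Fin dBC) = dAB ^ dBC * dBC := by
      simp [Fintype.card_fun]
    refine ⟨p, hpm, le_of_eq (by rw [hpd, hcard]), ?_⟩
    have hpow : ∀ (k : ℕ) (x : M), (((f ^ k) x : M) : C) = c ^ k * (x : C) := by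
      intro k
      induction k with
      | zero => intro x; simp
      | succ k ih =>
        intro x
        rw [pow_succ, Module.End.mul_apply, ih, hfapp, pow_succ]
        ring
    have heval : ∀ x : M, (((Polynomial.aeval f p) x : M) : C) =
        Polynomial.aeval c p * (x : C) := by
      intro x
      rw [Polynomial.aeval_eq_sum_range (x := f), Polynomial.aeval_eq_sum_range (x := c)]
      rw [LinearMap.sum_apply]
      push_cast
      rw [Finset.sum_mul]
      refine Finset.sum_congr rfl fun i _ => ?_
      rw [LinearMap.smul_apply, SetLike.val_smul, hpow, smul_mul_assoc]
    have h2 := heval ⟨1, h1M⟩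
    rw [hp0] at h2
    simp only [LinearMap.zero_apply, ZeroMemClass.coe_zero, Submodule.coe_mk, mul_one] at h2
    exact h2.symm
  exact ⟨⟨fun c => ((key c).elim fun p hp => ⟨p, hp.1, hp.2.2⟩)⟩, key⟩
end

section
/- Let A ⊆ B be an integral extension of commutative rings and S a multiplicatively closed subset of A. Then S⁻¹A ⊆ S⁻¹B is an integral extension, and the integral degree of S⁻¹B over S⁻¹A is at most the integral degree of B over A: d_{S⁻¹A}(S⁻¹B) ≤ d_A(B). -/
/-- If `A ⊆ B` is integral and `S ⊆ A` is multiplicatively closed, then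
`S⁻¹A ⊆ S⁻¹B` is integral and `d_{S⁻¹A}(S⁻¹B) ≤ d_A(B)`. -/
theorem stmt5 {A B : Type*} [CommRing A] [CommRing B] [Algebra A B]
    (hinj : Function.Injective (algebraMap A B)) (S : Submonoid A)
    (Aₛ Bₛ : Type*) [CommRing Aₛ] [CommRing Bₛ]
    [Algebra A Aₛ] [IsLocalization S Aₛ]
    [Algebra B Bₛ] [Algebra A Bₛ] [IsScalarTower A B Bₛ]
    [IsLocalization (Algebra.algebraMapSubmonoid B S) Bₛ]
    [Algebra Aₛ Bₛ] [IsScalarTower A Aₛ Bₛ]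
    (hint : Algebra.IsIntegral A B) (d : ℕ)
    (hd : ∀ b : B, ∃ p : Polynomial A, p.Monic ∧ p.natDegree ≤ d ∧ Polynomial.aeval b p = 0) :
    Algebra.IsIntegral Aₛ Bₛ ∧
      ∀ b : Bₛ, ∃ p : Polynomial Aₛ, p.Monic ∧ p.natDegree ≤ d ∧ Polynomial.aeval b p = 0 := by
  have key : ∀ b : Bₛ, ∃ p : Polynomial Aₛ, p.Monic ∧ p.natDegree ≤ d ∧
      Polynomial.aeval b p = 0 := by
    intro b
    obtain ⟨⟨x, t⟩, hb⟩ := IsLocalization.mk'_surjective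
      (Algebra.algebraMapSubmonoid B S) b
    dsimp only at hb
    obtain ⟨s, hs, hst⟩ := t.2
    obtain ⟨p, hm, hdeg, hp⟩ := hd x
    set σ : Aₛ := IsLocalization.mk' Aₛ (1 : A) ⟨s, hs⟩ with hσ
    refine ⟨(p.map (algebraMap A Aₛ)).scaleRoots σ, ?_, ?_, ?_⟩
    · exact (Polynomial.monic_scaleRoots_iff σ).2 (hm.map _)
    · rw [Polynomial.natDegree_scaleRoots]
      exact le_trans Polynomial.natDegree_map_le hdeg
    · have hx : Polynomial.aeval (algebraMap B Bₛ x) (p.map (algebraMap A Aₛ)) = 0 := by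
        rw [Polynomial.aeval_map_algebraMap, ← IsScalarTower.toAlgHom_apply A B Bₛ,
          Polynomial.aeval_algHom_apply, hp, map_zero]
      have := Polynomial.scaleRoots_aeval_eq_zero (r := σ) hx
      convert this using 2
      have halg : algebraMap Aₛ Bₛ σ =
          IsLocalization.mk' Bₛ (algebraMap A B 1)
            ⟨algebraMap A B s, Algebra.mem_algebraMapSubmonoid_of_mem ⟨s, hs⟩⟩ :=
        IsLocalization.algebraMap_mk' (S := B) (Rₘ := Aₛ) (Sₘ := Bₛ) 1 ⟨s, hs⟩
      rw [← hb, halg, map_one]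
      have ht : t = ⟨algebraMap A B s,
          Algebra.mem_algebraMapSubmonoid_of_mem ⟨s, hs⟩⟩ := by
        ext; exact hst.symm
      rw [ht, IsLocalization.mk'_eq_mul_mk'_one, mul_comm]
  refine ⟨⟨fun b => ?_⟩, key⟩
  obtain ⟨p, hm, _, hp⟩ := key b
  exact ⟨p, hm, hp⟩
end

section
/- Let A be a commutative ring and x, y ∈ A with x a non zero divisor. Then y/x (in the total quotient ring of A) is integral over A satisfying a monic equation of degree at most n if and only if yⁿ ∈ x·(x,y)^{n-1}, i.e. the colon ideal (x·(x,y)^{n-1} : yⁿ) equals A. -/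
open Polynomial Finset

lemma mul_mem_span_of_forall {A : Type*} [CommRing A] {s : Set A} {J : Ideal A} (x : A)
    (h : ∀ z ∈ s, x * z ∈ J) : ∀ z ∈ Ideal.span s, x * z ∈ J := by
  intro z hz
  refine Submodule.span_induction (p := fun z _ => x * z ∈ J) h (by simp)
    (fun p q _ _ hp hq => by show x * (p + q) ∈ J; rw [mul_add]; exact J.add_mem hp hq)
    (fun c p _ hp => by
      show x * (c • p) ∈ J
      rw [smul_eq_mul, mul_left_comm]
      exact J.mul_mem_left c hp) hz

/-- powers of the two-generator ideal are spanned by monomials -/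
lemma pow_span_pair_le {A : Type*} [CommRing A] (x y : A) (m : ℕ) :
    Ideal.span {x, y} ^ m ≤
      Ideal.span (Set.range fun i : Fin (m + 1) => x ^ (m - (i : ℕ)) * y ^ (i : ℕ)) := by
  induction m with
  | zero =>
      intro z hz
      have h1 : (1 : A) ∈ Ideal.span (Set.range fun i : Fin 1 => x ^ (0 - (i : ℕ)) * y ^ (i : ℕ)) :=
        Ideal.subset_span ⟨0, by simp⟩
      have h2 : Ideal.span (Set.range fun i : Fin 1 => x ^ (0 - (i : ℕ)) * y ^ (i : ℕ)) = ⊤ :=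
        (Ideal.eq_top_iff_one _).2 h1
      rw [h2]; trivial
  | succ m ih =>
      rw [pow_succ]
      refine Ideal.mul_le.2 fun r hr s hs => ?_
      have hr' := ih hr
      obtain ⟨a, b, rfl⟩ := Ideal.mem_span_pair.1 hs
      rw [mul_add]
      refine Ideal.add_mem _ ?_ ?_
      · rw [show r * (a * x) = a * (x * r) by ring]
        refine Ideal.mul_mem_left _ _ ?_
        refine mul_mem_span_of_forall x ?_ r hr'
        rintro _ ⟨i, rfl⟩
        refine Ideal.subset_span ⟨⟨(i : ℕ), i.2.trans (Nat.lt_succ_self _)⟩, ?_⟩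
        simp only
        rw [← mul_assoc, ← pow_succ']
        congr 2
        omega
      · rw [show r * (b * y) = b * (y * r) by ring]
        refine Ideal.mul_mem_left _ _ ?_
        refine mul_mem_span_of_forall y ?_ r hr'
        rintro _ ⟨i, rfl⟩
        refine Ideal.subset_span ⟨⟨(i : ℕ) + 1, by omega⟩, ?_⟩
        simp only
        have hsub : m + 1 - ((i : ℕ) + 1) = m - (i : ℕ) := by omega
        rw [hsub, pow_succ]
        ring

/-- For `x, y ∈ A` with `x` a non zero divisor, the fraction `y/x` in the
total quotient ring of `A` is integral over `A` with a monic equation of degree at most `n`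
iff `yⁿ ∈ x·(x,y)^{n-1}`, i.e. iff the colon ideal `(x·(x,y)^{n-1} : yⁿ)` equals `A`. -/
theorem stmt6 {A : Type*} [CommRing A] (x y : A) (hx : x ∈ nonZeroDivisors A)
    (n : ℕ) (hn : 1 ≤ n) :
    ((∃ p : Polynomial A, p.Monic ∧ p.natDegree ≤ n ∧
        Polynomial.aeval (IsLocalization.mk' (FractionRing A) y ⟨x, hx⟩) p = 0) ↔
      y ^ n ∈ Ideal.span {x} * Ideal.span {x, y} ^ (n - 1)) ∧
    (y ^ n ∈ Ideal.span {x} * Ideal.span {x, y} ^ (n - 1) ↔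
      (Ideal.span {x} * Ideal.span {x, y} ^ (n - 1)).colon (Ideal.span {y ^ n}) = ⊤) := by
  set K := FractionRing A
  set φ := algebraMap A K with hφ
  set t := IsLocalization.mk' K y ⟨x, hx⟩ with ht
  have hinj : Function.Injective φ := IsFractionRing.injective A K
  have hxt : φ x * t = φ y := by
    rw [mul_comm]; exact IsLocalization.mk'_spec K y ⟨x, hx⟩
  have key : ∀ i ≤ n, (φ x) ^ n * t ^ i = φ (x ^ (n - i) * y ^ i) := by
    intro i hi
    have h1 : (φ x) ^ n = (φ x) ^ (n - i) * (φ x) ^ i := by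
      rw [← pow_add, Nat.sub_add_cancel hi]
    rw [h1, map_mul, map_pow, map_pow, mul_assoc, ← mul_pow, hxt]
  have main : ∀ p : Polynomial A, p.natDegree ≤ n →
      (φ x) ^ n * Polynomial.aeval t p =
        φ (∑ i ∈ range (n + 1), p.coeff i * (x ^ (n - i) * y ^ i)) := by
    intro p hp
    rw [Polynomial.aeval_eq_sum_range' (Nat.lt_succ_of_le hp) t, Finset.mul_sum, map_sum]
    refine Finset.sum_congr rfl fun i hi => ?_
    have hi' : i ≤ n := Nat.lt_succ_iff.1 (Finset.mem_range.1 hi)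
    rw [Algebra.smul_def, map_mul, ← hφ, mul_left_comm, key i hi']
  constructor
  · constructor
    · rintro ⟨p, hmonic, hdeg, heval⟩
      set q : Polynomial A := p * Polynomial.X ^ (n - p.natDegree) with hq
      have hqdeg : q.natDegree ≤ n := by
        refine le_trans Polynomial.natDegree_mul_le ?_
        have hb := Polynomial.natDegree_X_pow_le (R := A) (n - p.natDegree)
        omega
      have hcn : q.coeff n = 1 := by
        rw [hq, Polynomial.coeff_mul_X_pow', if_pos (by omega),
          show n - (n - p.natDegree) = p.natDegree by omega]
        exact hmonic.coeff_natDegree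
      have hqeval : Polynomial.aeval t q = 0 := by
        rw [hq, map_mul, heval, zero_mul]
      have h0 : (∑ i ∈ range (n + 1), q.coeff i * (x ^ (n - i) * y ^ i)) = 0 := by
        apply hinj
        rw [← main q hqdeg, hqeval, mul_zero, map_zero]
      rw [Finset.sum_range_succ] at h0
      rw [hcn, Nat.sub_self, pow_zero, one_mul, one_mul] at h0
      have hyn : y ^ n = -∑ i ∈ range n, q.coeff i * (x ^ (n - i) * y ^ i) := by
        linear_combination h0
      rw [hyn]
      refine neg_mem (Ideal.sum_mem _ fun i hi => ?_)
      have hi' : i < n := Finset.mem_range.1 hi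
      refine Ideal.mul_mem_left _ _ ?_
      have hx' : x ^ (n - i) * y ^ i = x * (x ^ (n - 1 - i) * y ^ i) := by
        rw [← mul_assoc, ← pow_succ']
        congr 2
        omega
      rw [hx']
      refine Ideal.mul_mem_mul (Ideal.subset_span rfl) ?_
      have hmem : x ^ (n - 1 - i) * y ^ i ∈
          Ideal.span {x, y} ^ (n - 1 - i) * Ideal.span {x, y} ^ i :=
        Ideal.mul_mem_mul
          (Ideal.pow_mem_pow (Ideal.subset_span (by simp)) _)
          (Ideal.pow_mem_pow (Ideal.subset_span (by simp)) _)
      rwa [← pow_add, Nat.sub_add_cancel (by omega)] at hmem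
    · intro hmem
      have hle : Ideal.span {x} * Ideal.span {x, y} ^ (n - 1) ≤
          Ideal.span (Set.range fun i : Fin n => x ^ (n - (i : ℕ)) * y ^ (i : ℕ)) := by
        refine Ideal.mul_le.2 fun r hr s hs => ?_
        obtain ⟨a, rfl⟩ := Ideal.mem_span_singleton.1 hr
        have hs' := pow_span_pair_le x y (n - 1) hs
        rw [mul_comm x a, mul_assoc]
        refine Ideal.mul_mem_left _ _ ?_
        refine mul_mem_span_of_forall x ?_ s hs'
        rintro _ ⟨i, rfl⟩
        have hi : (i : ℕ) < n := by have := i.2; omega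
        refine Ideal.subset_span ⟨⟨(i : ℕ), hi⟩, ?_⟩
        simp only
        rw [← mul_assoc, ← pow_succ']
        congr 2
        omega
      obtain ⟨c, hc⟩ := Ideal.mem_span_range_iff_exists_fun.1 (hle hmem)
      refine ⟨Polynomial.X ^ n - ∑ i : Fin n, Polynomial.C (c i) * Polynomial.X ^ (i : ℕ),
        Polynomial.monic_X_pow_sub (Polynomial.degree_sum_fin_lt c), ?_, ?_⟩
      · refine le_trans (Polynomial.natDegree_sub_le _ _) ?_
        refine max_le (Polynomial.natDegree_X_pow_le n) ?_
        refine le_trans (Polynomial.natDegree_sum_le_of_forall_le _ _ fun i _ => ?_) le_rfl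
        refine le_trans (Polynomial.natDegree_C_mul_le _ _) ?_
        exact le_trans (Polynomial.natDegree_X_pow_le _) (le_of_lt i.2)
      · have hu : IsUnit ((φ x) ^ n) :=
          (IsLocalization.map_units K ⟨x, hx⟩).pow n
        refine hu.mul_left_cancel ?_
        rw [mul_zero, map_sub, map_pow, Polynomial.aeval_X, mul_sub]
        have h1 : (φ x) ^ n * t ^ n = φ (y ^ n) := by
          have hk := key n le_rfl
          rwa [Nat.sub_self, pow_zero, one_mul] at hk
        have h2 : (φ x) ^ n * Polynomial.aeval t (∑ i : Fin n, Polynomial.C (c i) *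
            Polynomial.X ^ (i : ℕ)) = φ (y ^ n) := by
          rw [map_sum, Finset.mul_sum]
          have hterm : ∀ i : Fin n, (φ x) ^ n * Polynomial.aeval t (Polynomial.C (c i) *
              Polynomial.X ^ (i : ℕ)) = φ (c i * (x ^ (n - (i : ℕ)) * y ^ (i : ℕ))) := by
            intro i
            rw [map_mul, Polynomial.aeval_C, map_pow, Polynomial.aeval_X, mul_left_comm,
              key _ (le_of_lt i.2), ← map_mul]
          rw [Finset.sum_congr rfl fun i _ => hterm i, ← map_sum]
          congr 1
        rw [h1, sub_eq_zero, ← h2, map_sum, Finset.mul_sum]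
  · constructor
    · intro h
      rw [Ideal.eq_top_iff_one, Ideal.mem_colon_span_singleton, one_mul]
      exact h
    · intro h
      have h1 : (1 : A) ∈ (Ideal.span {x} * Ideal.span {x, y} ^ (n - 1)).colon
          (Ideal.span {y ^ n}) := h ▸ Submodule.mem_top
      rw [Ideal.mem_colon_span_singleton, one_mul] at h1
      exact h1
end

section
/- Let A be a commutative ring and x, y ∈ A with x a non zero divisor. Then y/x is integral over A of integral degree at most n if and only if (x) is a reduction of the ideal I = (x,y) with reduction number rn_{(x)}(I) ≤ n−1, i.e. Iⁿ = x·I^{n-1}. -/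
set_option maxHeartbeats 1000000

open Polynomial Finset

private lemma pow_le_aux {A : Type*} [CommRing A] (x y : A) :
    ∀ m : ℕ, Ideal.span {x, y} ^ (m + 1) ≤
      Ideal.span {x} * Ideal.span {x, y} ^ m ⊔ Ideal.span {y ^ (m + 1)} := by
  intro m
  induction m with
  | zero =>
    simp only [zero_add, pow_one, pow_zero, mul_one]
    rw [Ideal.span_insert]
  | succ m ih =>
    rw [pow_succ]
    refine le_trans (Ideal.mul_mono_left ih) ?_
    rw [Ideal.sup_mul]
    refine sup_le ?_ ?_
    · rw [mul_assoc, ← pow_succ]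
      exact le_sup_left
    · rw [Ideal.span_insert, Ideal.mul_sup, Ideal.span_singleton_mul_span_singleton,
        Ideal.span_singleton_mul_span_singleton, ← pow_succ]
      refine sup_le (le_trans ?_ le_sup_left) le_sup_right
      rw [mul_comm (y ^ (m + 1)) x, ← Ideal.span_singleton_mul_span_singleton]
      refine Ideal.mul_mono_right ?_
      rw [Ideal.span_le, Set.singleton_subset_iff]
      exact Ideal.pow_mem_pow (Ideal.mem_sup_right (Ideal.mem_span_singleton_self y)) (m + 1)

/-- Elements of `(x,y)^m` become `x^m * q(y/x)` in the fraction ring. -/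
private lemma rep_aux {A : Type*} [CommRing A] (x y : A) (hx : x ∈ nonZeroDivisors A) :
    ∀ m : ℕ, ∀ b ∈ Ideal.span {x, y} ^ m, ∃ q : Polynomial A, q.natDegree ≤ m ∧
      algebraMap A (FractionRing A) b =
        (algebraMap A (FractionRing A) x) ^ m *
          Polynomial.aeval (IsLocalization.mk' (FractionRing A) y ⟨x, hx⟩) q := by
  set K := FractionRing A
  set z := IsLocalization.mk' K y ⟨x, hx⟩ with hz
  have hxz : algebraMap A K x * z = algebraMap A K y := IsLocalization.mk'_spec' K y ⟨x, hx⟩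
  intro m
  induction m with
  | zero =>
    intro b _
    exact ⟨Polynomial.C b, by simp, by simp⟩
  | succ m ih =>
    intro b hb
    rw [pow_succ] at hb
    refine Submodule.mul_induction_on hb ?_ ?_
    · intro s hs t ht
      obtain ⟨q, hqdeg, hq⟩ := ih s hs
      obtain ⟨a, c, hac⟩ := Ideal.mem_span_pair.mp ht
      refine ⟨q * (Polynomial.C a + Polynomial.C c * Polynomial.X), ?_, ?_⟩
      · refine le_trans (Polynomial.natDegree_mul_le) ?_
        have h1 : (Polynomial.C a + Polynomial.C c * Polynomial.X).natDegree ≤ 1 := by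
          refine le_trans (Polynomial.natDegree_add_le _ _) (max_le (by simp) ?_)
          exact le_trans (Polynomial.natDegree_C_mul_le c Polynomial.X) Polynomial.natDegree_X_le
        omega
      · have htK : algebraMap A K t = algebraMap A K x *
            Polynomial.aeval z (Polynomial.C a + Polynomial.C c * Polynomial.X) := by
          rw [← hac, map_add, map_mul, map_mul, ← hxz]
          simp only [map_add, map_mul, Polynomial.aeval_C, Polynomial.aeval_X]
          ring
        rw [map_mul, hq, htK, Polynomial.aeval_mul]
        ring
    · rintro u v ⟨q1, h1, e1⟩ ⟨q2, h2, e2⟩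
      refine ⟨q1 + q2, le_trans (Polynomial.natDegree_add_le _ _) (by omega), ?_⟩
      rw [map_add, e1, e2, Polynomial.aeval_add]
      ring

/-- For `x, y ∈ A` with `x` a non zero divisor, `y/x` is integral over `A`
of integral degree at most `n` iff `(x)` is a reduction of `I = (x,y)` with reduction
number at most `n-1`, i.e. `Iⁿ = x·I^{n-1}`. -/
theorem stmt7 {A : Type*} [CommRing A] (x y : A) (hx : x ∈ nonZeroDivisors A)
    (n : ℕ) (hn : 1 ≤ n) :
    (∃ p : Polynomial A, p.Monic ∧ p.natDegree ≤ n ∧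
        Polynomial.aeval (IsLocalization.mk' (FractionRing A) y ⟨x, hx⟩) p = 0) ↔
      Ideal.span {x, y} ^ n = Ideal.span {x} * Ideal.span {x, y} ^ (n - 1) := by
  obtain ⟨m, rfl⟩ : ∃ m, n = m + 1 := ⟨n - 1, by omega⟩
  rcases subsingleton_or_nontrivial A with hA | hA
  · constructor
    · intro _
      apply Ideal.ext
      intro a
      have ha : a = 0 := Subsingleton.elim a 0
      subst ha
      simp
    · intro _
      refine ⟨1, Polynomial.monic_one, by simp, ?_⟩
      have h10 : (1 : FractionRing A) = 0 := by
        rw [← map_one (algebraMap A (FractionRing A)), Subsingleton.elim (1 : A) 0, map_zero]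
      rw [map_one, h10]
  set K := FractionRing A
  set z := IsLocalization.mk' K y ⟨x, hx⟩ with hz
  have hxz : algebraMap A K x * z = algebraMap A K y := IsLocalization.mk'_spec' K y ⟨x, hx⟩
  have hinj : Function.Injective (algebraMap A K) := IsFractionRing.injective A K
  set I := Ideal.span ({x, y} : Set A) with hI
  have hyI : y ∈ I := Ideal.subset_span (by simp)
  have hxI : x ∈ I := Ideal.subset_span (by simp)
  have hsimp : m + 1 - 1 = m := rfl
  constructor
  · rintro ⟨p, hp, hpn, hp0⟩
    have hmem : y ^ (m + 1) ∈ Ideal.span {x} * I ^ m := by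
      set q := p * Polynomial.X ^ (m + 1 - p.natDegree) with hq
      have hqm : q.Monic := hp.mul (Polynomial.monic_X_pow _)
      have hqd : q.natDegree = m + 1 := by
        rw [hq, hp.natDegree_mul (Polynomial.monic_X_pow _), Polynomial.natDegree_X_pow]
        omega
      have hq0 : Polynomial.aeval z q = 0 := by
        rw [hq, map_mul, hp0, zero_mul]
      have key : ∑ i ∈ range (m + 1 + 1), q.coeff i * (y ^ i * x ^ (m + 1 - i)) = 0 := by
        apply hinj
        rw [map_zero, map_sum]
        have step : ∀ i ∈ range (m + 1 + 1),
            algebraMap A K (q.coeff i * (y ^ i * x ^ (m + 1 - i))) =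
              (algebraMap A K x) ^ (m + 1) * (q.coeff i • z ^ i) := by
          intro i hi
          rw [mem_range] at hi
          have hpow : (algebraMap A K x) ^ (m + 1) * z ^ i =
              (algebraMap A K x) ^ (m + 1 - i) * (algebraMap A K y) ^ i := by
            calc (algebraMap A K x) ^ (m + 1) * z ^ i
                = (algebraMap A K x) ^ (m + 1 - i) * ((algebraMap A K x) ^ i * z ^ i) := by
                  rw [← mul_assoc, ← pow_add]
                  congr 2
                  omega
              _ = (algebraMap A K x) ^ (m + 1 - i) * (algebraMap A K x * z) ^ i := by
                  rw [mul_pow]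
              _ = (algebraMap A K x) ^ (m + 1 - i) * (algebraMap A K y) ^ i := by rw [hxz]
          rw [Algebra.smul_def, map_mul, map_mul, map_pow, map_pow]
          linear_combination (-(algebraMap A K (q.coeff i))) * hpow
        rw [Finset.sum_congr rfl step, ← Finset.mul_sum]
        have hsum := Polynomial.aeval_eq_sum_range (p := q) z
        rw [hqd] at hsum
        rw [← hsum, hq0, mul_zero]
      rw [Finset.sum_range_succ] at key
      have hcn : q.coeff (m + 1) = 1 := by
        have := hqm.coeff_natDegree
        rwa [hqd] at this
      rw [hcn, one_mul, Nat.sub_self, pow_zero, mul_one] at key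
      have hyeq : y ^ (m + 1) =
          -∑ i ∈ range (m + 1), q.coeff i * (y ^ i * x ^ (m + 1 - i)) := by
        linear_combination key
      rw [hyeq]
      apply neg_mem
      apply Ideal.sum_mem
      intro i hi
      rw [mem_range] at hi
      apply Ideal.mul_mem_left
      have heq : y ^ i * x ^ (m + 1 - i) = x * (y ^ i * x ^ (m - i)) := by
        rw [show m + 1 - i = (m - i) + 1 by omega, pow_succ]; ring
      rw [heq]
      apply Ideal.mul_mem_mul (Ideal.mem_span_singleton_self x)
      have hmm : y ^ i * x ^ (m - i) ∈ I ^ i * I ^ (m - i) :=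
        Ideal.mul_mem_mul (Ideal.pow_mem_pow hyI i) (Ideal.pow_mem_pow hxI (m - i))
      rwa [← pow_add, show i + (m - i) = m by omega] at hmm
    apply le_antisymm
    · rw [hsimp]
      refine le_trans (pow_le_aux x y m) (sup_le le_rfl ?_)
      rw [Ideal.span_le, Set.singleton_subset_iff]
      exact hmem
    · rw [hsimp]
      calc Ideal.span {x} * I ^ m ≤ I * I ^ m :=
            Ideal.mul_mono_left (by rw [Ideal.span_le, Set.singleton_subset_iff]; exact hxI)
        _ = I ^ (m + 1) := (pow_succ' I m).symm
  · intro h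
    have hmem : y ^ (m + 1) ∈ Ideal.span {x} * I ^ m := by
      rw [hsimp] at h
      rw [← h]
      exact Ideal.pow_mem_pow hyI (m + 1)
    obtain ⟨b, hb, hxb⟩ := Ideal.mem_span_singleton_mul.mp hmem
    obtain ⟨q, hqdeg, hq⟩ := rep_aux x y hx m b hb
    have hcancel : z ^ (m + 1) = Polynomial.aeval z q := by
      have hu : IsUnit ((algebraMap A K x) ^ (m + 1)) :=
        (IsLocalization.map_units K (⟨x, hx⟩ : nonZeroDivisors A)).pow _
      apply hu.mul_left_cancel
      calc (algebraMap A K x) ^ (m + 1) * z ^ (m + 1)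
          = (algebraMap A K x * z) ^ (m + 1) := by rw [mul_pow]
        _ = (algebraMap A K y) ^ (m + 1) := by rw [hxz]
        _ = algebraMap A K (y ^ (m + 1)) := by rw [map_pow]
        _ = algebraMap A K (x * b) := by rw [hxb]
        _ = algebraMap A K x * ((algebraMap A K x) ^ m * Polynomial.aeval z q) := by
            rw [map_mul, hq]
        _ = (algebraMap A K x) ^ (m + 1) * Polynomial.aeval z q := by ring
    refine ⟨Polynomial.X ^ (m + 1) - q, ?_, ?_, ?_⟩
    · apply Polynomial.monic_X_pow_sub
      calc q.degree ≤ (m : WithBot ℕ) := Polynomial.natDegree_le_iff_degree_le.mp hqdeg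
        _ < ((m + 1 : ℕ) : WithBot ℕ) := by exact_mod_cast Nat.lt_succ_self m
    · refine le_trans (Polynomial.natDegree_sub_le _ _) ?_
      simp only [Polynomial.natDegree_X_pow, sup_le_iff]
      omega
    · rw [map_sub, Polynomial.aeval_X_pow, hcancel, sub_self]
end

section
/- Let A be a noetherian ring, I an ideal, and N ⊆ M finitely generated A-modules. Then there exists an integer s ≥ 0 such that for all n ≥ s, Iⁿ M ∩ N = I^{n-s}(I^s M ∩ N). -/
/-- Artin–Rees: For a noetherian ring `A`, ideal `I`, and finitely generated
modules `N ⊆ M`, there is `s ≥ 0` with `IⁿM ∩ N = I^{n-s}(I^s M ∩ N)` for all `n ≥ s`. -/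
theorem stmt8 {A : Type*} [CommRing A] [IsNoetherianRing A]
    {M : Type*} [AddCommGroup M] [Module A M] [Module.Finite A M]
    (I : Ideal A) (N : Submodule A M) :
    ∃ s : ℕ, ∀ n, s ≤ n →
      (I ^ n • ⊤ : Submodule A M) ⊓ N = I ^ (n - s) • ((I ^ s • ⊤ : Submodule A M) ⊓ N) := by
  -- transfer to a module in the same universe as A
  obtain ⟨n, f, hf⟩ := Module.Finite.exists_fin' A M
  let M' := (Fin n → A) ⧸ LinearMap.ker f
  let e : M' ≃ₗ[A] M := f.quotKerEquivOfSurjective hf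
  have hinj : Function.Injective e.symm.toLinearMap := e.symm.injective
  obtain ⟨s, hs⟩ := Ideal.exists_pow_inf_eq_pow_smul (M := M') I (N.map e.symm.toLinearMap)
  refine ⟨s, fun m hm => ?_⟩
  have key := hs m hm
  apply_fun Submodule.map e.symm.toLinearMap using
    Submodule.map_injective_of_injective hinj
  rw [Submodule.map_inf _ hinj, Submodule.map_smul'', Submodule.map_smul'',
    Submodule.map_inf _ hinj, Submodule.map_smul'',
    Submodule.map_top, LinearEquiv.range] at *
  exact key
end

section
/- Let A be a noetherian ring, J ⊆ I two ideals of A contained in the Jacobson radical of A, and N ⊆ M finitely generated A-modules. If an integer s satisfies Iⁿ M ∩ N = I^{n-s}(I^s M ∩ N) + J·Iⁿ M ∩ N for all n ≥ s+1, then Iⁿ M ∩ N = I^{n-s}(I^s M ∩ N) for all n ≥ s+1. -/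
universe u v

/-- Krull's intersection theorem for ideals contained in the Jacobson radical. -/
theorem krull_aux {A : Type u} [CommRing A] [IsNoetherianRing A]
    {M : Type v} [AddCommGroup M] [Module A M] [Module.Finite A M]
    (I : Ideal A) (hI : I ≤ (⊥ : Ideal A).jacobson) :
    (⨅ i : ℕ, I ^ i • ⊤ : Submodule A M) = ⊥ := by
  -- transfer to a single universe via ULift
  let e : A ≃+* ULift.{v} A := ULift.ringEquiv.symm
  haveI : IsNoetherianRing (ULift.{v} A) := isNoetherianRing_of_ringEquiv A e
  haveI : Module.Finite (ULift.{v} A) (ULift.{u} M) := by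
    obtain ⟨S, hS⟩ := Module.Finite.fg_top (R := A) (M := M)
    refine ⟨Submodule.fg_def.2 ⟨ULift.up '' (S : Set M), (S.finite_toSet.image _), ?_⟩⟩
    rw [eq_top_iff]
    rintro ⟨x⟩ -
    have hx : x ∈ Submodule.span A (S : Set M) := by rw [hS]; trivial
    refine Submodule.span_induction (p := fun y _ => (ULift.up y : ULift.{u} M) ∈
        Submodule.span (ULift.{v} A) (ULift.up '' (S : Set M)))
      (fun y hy => Submodule.subset_span ⟨y, hy, rfl⟩)
      (Submodule.zero_mem _) (fun y z _ _ hy hz =>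
        show (ULift.up y + ULift.up z : ULift.{u} M) ∈ _ from Submodule.add_mem _ hy hz)
      (fun a y _ hy =>
        show ((ULift.up a : ULift.{v} A) • ULift.up y : ULift.{u} M) ∈ _ from
          Submodule.smul_mem _ _ hy) hx
  rw [eq_bot_iff]
  intro x hx
  have hup : ∀ i : ℕ,
      (ULift.up x : ULift.{u} M) ∈ ((I.map e) ^ i • ⊤ : Submodule (ULift.{v} A) (ULift.{u} M)) := by
    intro i
    have hx' : x ∈ (I ^ i • ⊤ : Submodule A M) := Submodule.mem_iInf _ |>.mp hx i
    rw [← Ideal.map_pow]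
    refine Submodule.smul_induction_on hx' ?_ ?_
    · intro r hr m _
      exact show ((ULift.up r : ULift.{v} A) • ULift.up m : ULift.{u} M) ∈ _ from
        Submodule.smul_mem_smul (Ideal.mem_map_of_mem e hr) trivial
    · intro m n hm hn
      exact show (ULift.up m + ULift.up n : ULift.{u} M) ∈ _ from Submodule.add_mem _ hm hn
  have hmem : (ULift.up x : ULift.{u} M) ∈
      (⨅ i : ℕ, (I.map e) ^ i • ⊤ : Submodule (ULift.{v} A) (ULift.{u} M)) :=
    Submodule.mem_iInf _ |>.mpr hup
  obtain ⟨r, hr⟩ := ((I.map e).mem_iInf_smul_pow_eq_bot_iff (ULift.up x)).mp hmem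
  obtain ⟨a, ha, hae⟩ := Ideal.mem_map_iff_of_surjective e e.surjective |>.mp r.prop
  have hax : a • x = x := by
    have h1 : (r : ULift.{v} A) • (ULift.up x : ULift.{u} M) = ULift.up (a • x) := by
      rw [← hae]; rfl
    rw [h1] at hr
    exact congrArg ULift.down hr
  have hu : IsUnit (a * (-1) + 1) := Ideal.mem_jacobson_bot.mp (hI ha) (-1)
  have hz : (a * (-1) + 1) • x = 0 := by
    rw [add_smul, one_smul, mul_neg_one, neg_smul, hax, neg_add_cancel]
  simpa using hu.smul_left_cancel.mp (by simpa using hz)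

/-- If `J ⊆ I` are ideals contained in the Jacobson radical of the noetherian
ring `A`, and `s` satisfies the Artin–Rees property modulo `J` for `N ⊆ M`, then `s`
satisfies the usual Artin–Rees property. -/
theorem stmt9 {A : Type*} [CommRing A] [IsNoetherianRing A]
    {M : Type*} [AddCommGroup M] [Module A M] [Module.Finite A M]
    (I J : Ideal A) (hJI : J ≤ I) (hI : I ≤ (⊥ : Ideal A).jacobson)
    (N : Submodule A M) (s : ℕ)
    (h : ∀ n, s + 1 ≤ n →
      (I ^ n • ⊤ : Submodule A M) ⊓ N =
        I ^ (n - s) • ((I ^ s • ⊤ : Submodule A M) ⊓ N) ⊔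
          (J • (I ^ n • ⊤ : Submodule A M)) ⊓ N) :
    ∀ n, s + 1 ≤ n →
      (I ^ n • ⊤ : Submodule A M) ⊓ N = I ^ (n - s) • ((I ^ s • ⊤ : Submodule A M) ⊓ N) := by
  intro n hn
  set P : Submodule A M := I ^ (n - s) • ((I ^ s • ⊤ : Submodule A M) ⊓ N) with hP
  refine le_antisymm ?_ ?_
  · -- key claim: Q_n ≤ P ⊔ (I^(n+k) • ⊤ ⊓ N) for all k
    have key : ∀ k : ℕ, (I ^ n • ⊤ : Submodule A M) ⊓ N ≤ P ⊔ ((I ^ (n + k) • ⊤ : Submodule A M) ⊓ N) := by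
      intro k
      induction k with
      | zero => simpa using le_sup_right
      | succ k ih =>
        refine ih.trans (sup_le le_sup_left ?_)
        rw [h (n + k) (hn.trans (by omega))]
        refine sup_le ?_ ?_
        · refine le_trans (Submodule.smul_mono_left (Ideal.pow_le_pow_right (by omega))) le_sup_left
        · refine le_trans (inf_le_inf_right N ?_) le_sup_right
          calc J • (I ^ (n + k) • ⊤ : Submodule A M)
              ≤ I • (I ^ (n + k) • ⊤ : Submodule A M) := Submodule.smul_mono_left hJI
            _ = (I ^ (n + k + 1) • ⊤ : Submodule A M) := by
                rw [pow_succ', ← smul_eq_mul, Submodule.smul_assoc]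
    intro x hx
    have hq : ∀ k : ℕ, Submodule.Quotient.mk (p := P) x ∈ (I ^ k • ⊤ : Submodule A (M ⧸ P)) := by
      intro k
      have hx' := key k hx
      have : x ∈ P ⊔ (I ^ (n + k) • ⊤ : Submodule A M) :=
        sup_le_sup_left inf_le_left P hx'
      obtain ⟨y, hy, z, hz, rfl⟩ := Submodule.mem_sup.mp this
      have hmk : Submodule.Quotient.mk (p := P) (y + z) = Submodule.Quotient.mk (p := P) z := by
        rw [Submodule.Quotient.mk_add, (Submodule.Quotient.mk_eq_zero P).mpr hy, zero_add]
      rw [hmk]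
      have := Submodule.mem_map_of_mem (f := P.mkQ) hz
      rw [Submodule.map_smul''] at this
      exact Submodule.smul_mono (Ideal.pow_le_pow_right (by omega : k ≤ n + k)) le_top this
    have : Submodule.Quotient.mk (p := P) x ∈ (⨅ i : ℕ, I ^ i • ⊤ : Submodule A (M ⧸ P)) :=
      Submodule.mem_iInf _ |>.mpr hq
    rw [krull_aux I hI] at this
    exact (Submodule.Quotient.mk_eq_zero P).mp this
  · refine le_inf ?_ ?_
    · calc P ≤ I ^ (n - s) • (I ^ s • ⊤ : Submodule A M) := Submodule.smul_mono le_rfl inf_le_left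
        _ = (I ^ (n - s + s) • ⊤ : Submodule A M) := by rw [pow_add, ← smul_eq_mul, Submodule.smul_assoc]
        _ = (I ^ n • ⊤ : Submodule A M) := by rw [Nat.sub_add_cancel (by omega)]
    · calc P ≤ I ^ (n - s) • N := Submodule.smul_mono le_rfl inf_le_right
        _ ≤ N := Submodule.smul_le_right
end

section
/- Let A be a commutative ring, I = (x,y) a two-generated ideal with x an M-regular element for an A-module M. Then for every n ≥ 2, the module of effective n-relations of I with respect to M is E(I;M)_n ≅ (x I^{n-1} M : yⁿ) / (x I^{n-2} M : y^{n-1}), where the colons are taken in M. -/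
open Pointwise

section aux
variable {A : Type*} [CommRing A] {M : Type*} [AddCommGroup M] [Module A M]

lemma aux_mem_singleton_mul_smul (x : A) (J : Ideal A) (m : M) :
    m ∈ (Ideal.span {x} * J) • (⊤ : Submodule A M) ↔
      ∃ w ∈ J • (⊤ : Submodule A M), x • w = m := by
  rw [mul_smul, Submodule.ideal_span_singleton_smul]
  constructor
  · intro h
    rw [← SetLike.mem_coe, Submodule.coe_pointwise_smul] at h
    obtain ⟨w, hw, hwx⟩ := Set.mem_smul_set.mp h
    exact ⟨w, hw, hwx⟩
  · rintro ⟨w, hw, rfl⟩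
    exact Submodule.smul_mem_pointwise_smul w x _ hw

lemma aux_pow_le (x y : A) : ∀ k : ℕ, 1 ≤ k →
    Ideal.span {x, y} ^ k ≤
      Ideal.span {x} * Ideal.span {x, y} ^ (k - 1) ⊔ Ideal.span {y ^ k} := by
  have hI : Ideal.span {x, y} = Ideal.span {x} ⊔ Ideal.span {y} := by
    rw [show ({x, y} : Set A) = {x} ∪ {y} by rfl, Ideal.span_union]
  have hyI : y ∈ Ideal.span {x, y} := Ideal.subset_span (by simp)
  intro k hk
  induction k with
  | zero => omega
  | succ k ih =>
    rcases Nat.lt_or_ge k 1 with h1 | hk1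
    · have hk0 : k = 0 := by omega
      subst hk0
      rw [pow_one, pow_one, Nat.sub_self, pow_zero, mul_one, hI]
    · have ihk := ih hk1
      have step1 : Ideal.span {x, y} ^ (k + 1)
          ≤ Ideal.span {x, y} * (Ideal.span {x} * Ideal.span {x, y} ^ (k - 1)
              ⊔ Ideal.span {y ^ k}) := by
        rw [pow_succ, mul_comm]
        exact Ideal.mul_mono_right ihk
      have step2 : Ideal.span {x, y} * (Ideal.span {x} * Ideal.span {x, y} ^ (k - 1)
              ⊔ Ideal.span {y ^ k})
          ≤ Ideal.span {x} * Ideal.span {x, y} ^ k ⊔ Ideal.span {y ^ (k + 1)} := by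
        rw [Ideal.mul_sup]
        apply sup_le
        · apply le_sup_of_le_left
          rw [show Ideal.span {x, y} * (Ideal.span {x} * Ideal.span {x, y} ^ (k - 1))
                = Ideal.span {x} * (Ideal.span {x, y} * Ideal.span {x, y} ^ (k - 1)) by ring,
              ← pow_succ', show k - 1 + 1 = k by omega]
        · rw [hI, Ideal.sup_mul]
          apply sup_le
          · apply le_sup_of_le_left
            apply Ideal.mul_mono_right
            rw [Ideal.span_singleton_le_iff_mem]
            rw [← hI]; exact Ideal.pow_mem_pow hyI k
          · apply le_sup_of_le_right
            rw [Ideal.span_singleton_mul_span_singleton, ← pow_succ']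
      have := le_trans step1 step2
      simpa using this

end aux

/-- For `I = (x,y)` with `x` an `M`-regular element, the module of effective
`n`-relations of `I` with respect to `M` — which, as in the context, is the first homology of
the truncated Koszul-type complex
`I^{n-2}M → I^{n-1}M ⊕ I^{n-1}M → IⁿM`, `u ↦ (−yu, xu)`, `(z,t) ↦ xz + yt` —
is isomorphic to `(x I^{n-1} M : yⁿ) / (x I^{n-2} M : y^{n-1})` (colons taken in `M`). -/
theorem stmt12 {A : Type*} [CommRing A] (M : Type*) [AddCommGroup M] [Module A M]
    (x y : A) (hx : ∀ m : M, x • m = 0 → m = 0) (n : ℕ) (hn : 2 ≤ n) :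
    letI I : Ideal A := Ideal.span {x, y}
    -- the Koszul-type complex in degree n
    letI D1 : M × M →ₗ[A] M := x • LinearMap.fst A M M + y • LinearMap.snd A M M
    letI D2 : M →ₗ[A] M × M := LinearMap.prod ((-y) • LinearMap.id) (x • LinearMap.id)
    letI K : Submodule A (M × M) :=
      (I ^ (n - 1) • (⊤ : Submodule A M)).prod (I ^ (n - 1) • (⊤ : Submodule A M)) ⊓
        LinearMap.ker D1
    letI Im : Submodule A (M × M) := (I ^ (n - 2) • (⊤ : Submodule A M)).map D2
    -- the colon modules
    letI Q1 : Submodule A M :=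
      Submodule.comap (LinearMap.lsmul A M (y ^ n))
        ((Ideal.span {x} * I ^ (n - 1)) • (⊤ : Submodule A M))
    letI Q2 : Submodule A M :=
      Submodule.comap (LinearMap.lsmul A M (y ^ (n - 1)))
        ((Ideal.span {x} * I ^ (n - 2)) • (⊤ : Submodule A M))
    Nonempty ((↥K ⧸ Submodule.comap K.subtype Im) ≃ₗ[A]
      (↥Q1 ⧸ Submodule.comap Q1.subtype Q2)) := by
  classical
  set I : Ideal A := Ideal.span {x, y} with hIdef
  set D1 : M × M →ₗ[A] M := x • LinearMap.fst A M M + y • LinearMap.snd A M M with hD1def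
  set D2 : M →ₗ[A] M × M := LinearMap.prod ((-y) • LinearMap.id) (x • LinearMap.id) with hD2def
  set K : Submodule A (M × M) :=
    (I ^ (n - 1) • (⊤ : Submodule A M)).prod (I ^ (n - 1) • (⊤ : Submodule A M)) ⊓
      LinearMap.ker D1 with hKdef
  set Im : Submodule A (M × M) := (I ^ (n - 2) • (⊤ : Submodule A M)).map D2 with hImdef
  set Q1 : Submodule A M :=
    Submodule.comap (LinearMap.lsmul A M (y ^ n))
      ((Ideal.span {x} * I ^ (n - 1)) • (⊤ : Submodule A M)) with hQ1def
  set Q2 : Submodule A M :=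
    Submodule.comap (LinearMap.lsmul A M (y ^ (n - 1)))
      ((Ideal.span {x} * I ^ (n - 2)) • (⊤ : Submodule A M)) with hQ2def
  have hn1 : n - 1 = (n - 2) + 1 := by omega
  have hn0 : n = (n - 1) + 1 := by omega
  have hxinj : ∀ a b : M, x • a = x • b → a = b := by
    intro a b h
    exact sub_eq_zero.mp (hx (a - b) (by rw [smul_sub, h, sub_self]))
  have hyI : y ∈ I := Ideal.subset_span (by simp)
  -- membership characterizations
  have hQ1mem : ∀ m : M, m ∈ Q1 ↔
      ∃ w ∈ I ^ (n - 1) • (⊤ : Submodule A M), x • w = y ^ n • m := by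
    intro m
    exact aux_mem_singleton_mul_smul x (I ^ (n - 1)) (y ^ n • m)
  have hQ2mem : ∀ m : M, m ∈ Q2 ↔
      ∃ w ∈ I ^ (n - 2) • (⊤ : Submodule A M), x • w = y ^ (n - 1) • m := by
    intro m
    exact aux_mem_singleton_mul_smul x (I ^ (n - 2)) (y ^ (n - 1) • m)
  -- the choice of w
  choose w hw1 hw2 using fun m : Q1 => (hQ1mem m).mp m.2
  -- helpful smul computation
  have hyy : ∀ m : M, y • (y ^ (n - 1) • m) = y ^ n • m := by
    intro m
    rw [smul_smul, ← pow_succ', ← hn0]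
  -- K-membership of the values of f
  have hKval : ∀ m : Q1, ((-(w m), y ^ (n - 1) • (m : M)) : M × M) ∈ K := by
    intro m
    refine ⟨⟨neg_mem (hw1 m), Submodule.smul_mem_smul (Ideal.pow_mem_pow hyI (n - 1))
      Submodule.mem_top⟩, ?_⟩
    show x • (-(w m)) + y • (y ^ (n - 1) • (m : M)) = 0
    rw [smul_neg, hw2 m, hyy]
    exact neg_add_cancel _
  -- the linear map F : Q1 → K
  set F : Q1 →ₗ[A] K :=
    { toFun := fun m => ⟨(-(w m), y ^ (n - 1) • (m : M)), hKval m⟩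
      map_add' := by
        intro a b
        have hwadd : w (a + b) = w a + w b := by
          apply hxinj
          rw [hw2, smul_add, hw2, hw2]
          exact smul_add (y ^ n) (a : M) (b : M)
        apply Subtype.ext
        show ((-(w (a + b)), y ^ (n - 1) • ((a + b : Q1) : M)) : M × M) =
          (-(w a), y ^ (n - 1) • (a : M)) + (-(w b), y ^ (n - 1) • (b : M))
        rw [hwadd, Prod.mk_add_mk, neg_add]
        exact Prod.ext_iff.mpr ⟨rfl, smul_add (y ^ (n - 1)) (a : M) (b : M)⟩
      map_smul' := by
        intro c a
        have hwsmul : w (c • a) = c • w a := by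
          apply hxinj
          rw [hw2, smul_comm x c, hw2]
          exact smul_comm (y ^ n) c (a : M)
        apply Subtype.ext
        show ((-(w (c • a)), y ^ (n - 1) • ((c • a : Q1) : M)) : M × M) =
          c • ((-(w a), y ^ (n - 1) • (a : M)) : M × M)
        rw [hwsmul, Prod.smul_mk, smul_neg]
        exact Prod.ext_iff.mpr ⟨rfl, smul_comm (y ^ (n - 1)) c (a : M)⟩ } with hF
  set ψ : Q1 →ₗ[A] (↥K ⧸ Submodule.comap K.subtype Im) :=
    (Submodule.comap K.subtype Im).mkQ ∘ₗ F with hψ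
  -- Im membership characterization
  have hImmem : ∀ p : M × M, p ∈ Im ↔
      ∃ u ∈ I ^ (n - 2) • (⊤ : Submodule A M), ((-(y • u), x • u) : M × M) = p := by
    intro p
    constructor
    · rintro ⟨u, hu, rfl⟩
      exact ⟨u, hu, by show (-(y • u), x • u) = ((-y) • u, x • u); rw [neg_smul]⟩
    · rintro ⟨u, hu, rfl⟩
      exact ⟨u, hu, by show ((-y) • u, x • u) = (-(y • u), x • u); rw [neg_smul]⟩
  -- kernel computation
  have hker : LinearMap.ker ψ = Submodule.comap Q1.subtype Q2 := by
    ext m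
    rw [LinearMap.mem_ker, hψ, LinearMap.comp_apply, Submodule.mkQ_apply,
      Submodule.Quotient.mk_eq_zero, Submodule.mem_comap, Submodule.mem_comap]
    show ((-(w m), y ^ (n - 1) • (m : M)) : M × M) ∈ Im ↔ (m : M) ∈ Q2
    rw [hImmem, hQ2mem]
    constructor
    · rintro ⟨u, hu, heq⟩
      exact ⟨u, hu, congrArg Prod.snd heq⟩
    · rintro ⟨u, hu, hxu⟩
      refine ⟨u, hu, ?_⟩
      have huw : y • u = w m := by
        apply hxinj
        rw [smul_comm x y, hxu, hyy, hw2]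
      rw [huw, hxu]
  -- surjectivity
  have hsurj : Function.Surjective ψ := by
    intro q
    obtain ⟨k, rfl⟩ := Submodule.Quotient.mk_surjective _ q
    have hk' := Submodule.mem_inf.mp k.2
    have hz : k.1.1 ∈ I ^ (n - 1) • (⊤ : Submodule A M) := hk'.1.1
    have ht : k.1.2 ∈ I ^ (n - 1) • (⊤ : Submodule A M) := hk'.1.2
    have hsum : x • k.1.1 + y • k.1.2 = 0 := hk'.2
    -- decompose t = k.1.2
    have hle : I ^ (n - 1) • (⊤ : Submodule A M) ≤
        (Ideal.span {x} * I ^ (n - 2)) • (⊤ : Submodule A M) ⊔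
          Ideal.span {y ^ (n - 1)} • (⊤ : Submodule A M) := by
      rw [← Submodule.sup_smul]
      apply Submodule.smul_mono_left
      have h := aux_pow_le x y (n - 1) (by omega)
      rwa [show n - 1 - 1 = n - 2 by omega] at h
    obtain ⟨a, ha, b, hb, hab⟩ := Submodule.mem_sup.mp (hle ht)
    obtain ⟨u, hu, rfl⟩ := (aux_mem_singleton_mul_smul x (I ^ (n - 2)) a).mp ha
    rw [Submodule.ideal_span_singleton_smul, ← SetLike.mem_coe,
      Submodule.coe_pointwise_smul] at hb
    obtain ⟨m0, -, rfl⟩ := Set.mem_smul_set.mp hb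
    -- m0 ∈ Q1
    have hyu : y • u ∈ I ^ (n - 1) • (⊤ : Submodule A M) := by
      rw [hn1, pow_succ', mul_smul]
      exact Submodule.smul_mem_smul hyI hu
    have hyt : y • k.1.2 = -(x • k.1.1) := eq_neg_of_add_eq_zero_left
      (by rw [add_comm]; exact hsum)
    have hxeq : x • (-k.1.1 - y • u) = y ^ n • m0 := by
      calc x • (-k.1.1 - y • u) = -(x • k.1.1) - x • (y • u) := by
            rw [smul_sub, smul_neg]
        _ = y • k.1.2 - y • (x • u) := by rw [← hyt, smul_comm x y]
        _ = y • (k.1.2 - x • u) := by rw [smul_sub]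
        _ = y • (y ^ (n - 1) • m0) := by rw [← hab, add_sub_cancel_left]
        _ = y ^ n • m0 := hyy m0
    have hm0 : m0 ∈ Q1 := (hQ1mem m0).mpr
      ⟨-k.1.1 - y • u, sub_mem (neg_mem hz) hyu, hxeq⟩
    set mq : Q1 := ⟨m0, hm0⟩ with hmq
    refine ⟨mq, ?_⟩
    have hwm : w mq = -k.1.1 - y • u := by
      apply hxinj
      rw [hw2, hxeq]
    show (Submodule.comap K.subtype Im).mkQ (F mq) = Submodule.Quotient.mk k
    rw [Submodule.mkQ_apply, Submodule.Quotient.eq, Submodule.mem_comap]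
    have hcoe : ((F mq - k : K) : M × M) =
        ((-(w mq), y ^ (n - 1) • m0) : M × M) - (k : M × M) := rfl
    rw [Submodule.subtype_apply, hcoe, hwm]
    refine (hImmem _).mpr ⟨-u, neg_mem hu, ?_⟩
    have h1 : -(y • -u) = -(-k.1.1 - y • u) - k.1.1 := by
      rw [smul_neg]; abel
    have h2 : x • -u = y ^ (n - 1) • m0 - k.1.2 := by
      rw [← hab, smul_neg]; abel
    exact Prod.ext_iff.mpr ⟨h1, h2⟩
  exact ⟨((Submodule.quotEquivOfEq _ _ hker.symm).trans
    (LinearMap.quotKerEquivOfSurjective ψ hsurj)).symm⟩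
end

section
/- Let A be a ring, I an ideal, M an A-module, and J = (x₁,...,x_s) ⊆ I a reduction of I with respect to M with reduction number r. Suppose there exists k ≥ 1 such that for all n ≥ r + k and all i = 1,...,s, [(x₁,...,x_{i-1})IⁿM : x_i] ∩ IⁿM = (x₁,...,x_{i-1})I^{n-1}M. Then the relation type of J with respect to I^r M satisfies rt(J; I^r M) ≤ k. -/
/-! Machinery: effective relations and relation type of an ideal with respect to a module,
via the canonical presentation of the Rees module `⊕ₙ IⁿM` as a quotient of the polynomial
module on the elements of `I` with coefficients in `M` (encoded as `(I →₀ ℕ) →₀ M`,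
a finitely supported family of elements of `M` indexed by monomials in the elements of `I`). -/

section RelType

variable {A : Type*} [CommRing A]

/-- Evaluation of a polynomial with coefficients in `M` and variables indexed by `ι`,
sending the variable `i` to `v i`. -/
noncomputable def reesEval (M : Type*) [AddCommGroup M] [Module A M]
    {ι : Type*} (v : ι → A) : ((ι →₀ ℕ) →₀ M) →ₗ[A] M :=
  Finsupp.lsum ℕ fun d => (d.prod fun i e => v i ^ e) • (LinearMap.id : M →ₗ[A] M)

/-- The submodule of homogeneous elements of degree `n` of the polynomial module. -/
def degSub (M : Type*) [AddCommGroup M] [Module A M] (ι : Type*) (n : ℕ) :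
    Submodule A ((ι →₀ ℕ) →₀ M) where
  carrier := {f | ∀ d ∈ f.support, (d.sum fun _ e => e) = n}
  add_mem' := by
    classical
    intro f g hf hg d hd
    rcases Finset.mem_union.mp (Finsupp.support_add hd) with h | h
    exacts [hf d h, hg d h]
  zero_mem' := by intro d hd; simp at hd
  smul_mem' := by intro c f hf d hd; exact hf d (Finsupp.support_smul hd)

/-- Multiplication by the degree-one variable `i`. -/
noncomputable def shiftMap (M : Type*) [AddCommGroup M] [Module A M] {ι : Type*} (i : ι) :
    ((ι →₀ ℕ) →₀ M) →ₗ[A] ((ι →₀ ℕ) →₀ M) :=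
  Finsupp.lmapDomain M A (fun d => d + Finsupp.single i 1)

/-- The degree-`n` part of the kernel of the canonical presentation. -/
noncomputable def effKer (M : Type*) [AddCommGroup M] [Module A M]
    {ι : Type*} (v : ι → A) (n : ℕ) : Submodule A ((ι →₀ ℕ) →₀ M) :=
  LinearMap.ker (reesEval M v) ⊓ degSub M ι n

/-- The module of effective `n`-relations `E(I;M)_n = ker γₙ / U₁ ker γₙ₋₁` vanishes. -/
noncomputable def effVanish (M : Type*) [AddCommGroup M] [Module A M]
    {ι : Type*} (v : ι → A) (n : ℕ) : Prop :=
  effKer M v n ≤ ⨆ i : ι, (effKer M v (n - 1)).map (shiftMap M i)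

/-- The relation type `rt(I;M)`: least `r ≥ 1` such that `E(I;M)ₙ = 0` for all `n ≥ r+1`,
computed from the canonical presentation indexed by all elements of `I`. -/
noncomputable def relType (M : Type*) [AddCommGroup M] [Module A M] (I : Ideal A) : ℕ :=
  sInf {r | 1 ≤ r ∧ ∀ n, r + 1 ≤ n → effVanish M (fun i : I => (i : A)) n}

/-- The reduction number `rn_J(I;M)`: least `n` with `I^{n+1}M = J(IⁿM)`. -/
noncomputable def redNum (J I : Ideal A) (M : Type*) [AddCommGroup M] [Module A M] : ℕ :=
  sInf {n | I ^ (n + 1) • (⊤ : Submodule A M) = J • (I ^ n • (⊤ : Submodule A M))}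

end RelType



section Aux
variable {A : Type*} [CommRing A] {M : Type*} [AddCommGroup M] [Module A M] {ι : Type*}

lemma single_mem_degSub {d : ι →₀ ℕ} {n : ℕ} (h : (d.sum fun _ e => e) = n) (m : M) :
    Finsupp.single d m ∈ degSub (A := A) M ι n := by
  intro d' hd'
  have := Finsupp.support_single_subset hd'
  simp only [Finset.mem_singleton] at this
  subst this; exact h

lemma degree_single (a : ι) (e : ℕ) : ((Finsupp.single a e).sum fun _ e => e) = e :=
  Finsupp.sum_single_index rfl

lemma degree_add (d d' : ι →₀ ℕ) :
    ((d + d').sum fun _ e => e) = (d.sum fun _ e => e) + (d'.sum fun _ e => e) :=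
  Finsupp.sum_add_index' (fun _ => rfl) (fun _ _ _ => rfl)

lemma shiftMap_mem_degSub {f : (ι →₀ ℕ) →₀ M} {n : ℕ} (hf : f ∈ degSub (A := A) M ι n) (i : ι) :
    shiftMap (A := A) M i f ∈ degSub (A := A) M ι (n + 1) := by
  classical
  intro d hd
  have := Finsupp.mapDomain_support (f := fun d => d + Finsupp.single i 1) (s := f) hd
  obtain ⟨d₀, hd₀, rfl⟩ := Finset.mem_image.mp this
  rw [degree_add, degree_single, hf d₀ hd₀]

lemma prod_pow_mem_pow (J : Ideal A) (v : ι → A) (hv : ∀ i, v i ∈ J) (d : ι →₀ ℕ) :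
    (d.prod fun i e => v i ^ e) ∈ J ^ (d.sum fun _ e => e) := by
  induction d using Finsupp.induction with
  | zero => simp [Ideal.one_eq_top]
  | single_add a b f haf hb ih =>
      rw [Finsupp.prod_add_index' (by intro x; simp) (by intro x b₁ b₂; rw [pow_add]),
        Finsupp.prod_single_index (by simp), degree_add, degree_single, pow_add]
      exact Ideal.mul_mem_mul (Ideal.pow_mem_pow (hv a) b) ih

lemma reesEval_mem_smul (J : Ideal A) (v : ι → A) (hv : ∀ i, v i ∈ J) {n : ℕ}
    {f : (ι →₀ ℕ) →₀ M} (hf : f ∈ degSub (A := A) M ι n) :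
    reesEval M v f ∈ J ^ n • (⊤ : Submodule A M) := by
  have hrw : reesEval M v f = f.sum fun d m => (d.prod fun i e => v i ^ e) • m := by
    rw [reesEval, Finsupp.lsum_apply]
    exact Finsupp.sum_congr fun d _ => rfl
  rw [hrw]
  refine Submodule.sum_mem _ fun d hd => ?_
  exact Submodule.smul_mem_smul (by rw [← hf d hd]; exact prod_pow_mem_pow J v hv d) trivial

lemma exists_sub_single {d : ι →₀ ℕ} {t : ℕ} (h : (d.sum fun _ e => e) = t + 1) :
    ∃ (a : ι) (d' : ι →₀ ℕ), d = d' + Finsupp.single a 1 ∧ (d'.sum fun _ e => e) = t := by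
  classical
  have hd : d ≠ 0 := by rintro rfl; simp at h
  obtain ⟨a, ha⟩ := Finsupp.support_nonempty_iff.mpr hd
  obtain ⟨e, he⟩ := Nat.exists_eq_succ_of_ne_zero (Finsupp.mem_support_iff.mp ha)
  have heq : d = (d.erase a + Finsupp.single a e) + Finsupp.single a 1 := by
    ext b
    by_cases hb : b = a
    · subst hb
      simp [Finsupp.erase_same, he]
    · simp [Finsupp.erase_ne hb, Finsupp.single_apply, Ne.symm hb, hb]
  refine ⟨a, d.erase a + Finsupp.single a e, heq, ?_⟩
  have h2 := h
  rw [heq, degree_add, degree_add, degree_single, degree_single] at h2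
  rw [degree_add, degree_single]
  omega

lemma reesEval_single (v : ι → A) (d : ι →₀ ℕ) (m : M) :
    reesEval M v (Finsupp.single d m) = (d.prod fun i e => v i ^ e) • m := by
  simp [reesEval]

lemma shiftMap_single (i : ι) (d : ι →₀ ℕ) (m : M) :
    shiftMap (A := A) M i (Finsupp.single d m) = Finsupp.single (d + Finsupp.single i 1) m := by
  simp [shiftMap, Finsupp.mapDomain_single]

lemma reesEval_shiftMap (v : ι → A) (i : ι) (f : (ι →₀ ℕ) →₀ M) :
    reesEval M v (shiftMap (A := A) M i f) = v i • reesEval M v f := by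
  induction f using Finsupp.induction_linear with
  | zero => simp
  | add f g hf hg => simp [hf, hg, smul_add]
  | single d m =>
      rw [shiftMap_single, reesEval_single, reesEval_single,
        Finsupp.prod_add_index' (by intro a; simp) (by intro a b₁ b₂; rw [pow_add]),
        Finsupp.prod_single_index (by simp), pow_one, mul_comm, mul_smul]

lemma shiftMap_comm (i j : ι) (f : (ι →₀ ℕ) →₀ M) :
    shiftMap (A := A) M i (shiftMap (A := A) M j f) = shiftMap (A := A) M j (shiftMap (A := A) M i f) := by
  induction f using Finsupp.induction_linear with
  | zero => simp
  | add f g hf hg => simp [hf, hg]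
  | single d m => rw [shiftMap_single, shiftMap_single, shiftMap_single, shiftMap_single,
      add_right_comm]

end Aux

section Main

variable {A : Type*} [CommRing A] {M : Type*} [AddCommGroup M] [Module A M]
variable (I J : Ideal A) (r : ℕ)

lemma mulSmul (I₁ I₂ : Ideal A) (N : Submodule A M) : (I₁ * I₂) • N = I₁ • (I₂ • N) := by
  rw [← Ideal.smul_eq_mul]; exact Submodule.smul_assoc I₁ I₂ N

lemma red_pow (hred : I ^ (r + 1) • (⊤ : Submodule A M) = J • (I ^ r • (⊤ : Submodule A M))) :
    ∀ t, I ^ (r + t) • (⊤ : Submodule A M) = J ^ t • (I ^ r • (⊤ : Submodule A M))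
  | 0 => by rw [pow_zero, Ideal.one_eq_top, Submodule.top_smul, add_zero]
  | (t + 1) => by
      have h1 : r + (t + 1) = t + (r + 1) := by omega
      calc I ^ (r + (t+1)) • (⊤ : Submodule A M)
          = (I ^ t * I ^ (r+1)) • (⊤ : Submodule A M) := by rw [h1, pow_add]
        _ = I ^ t • (I ^ (r+1) • (⊤ : Submodule A M)) := mulSmul _ _ _
        _ = I ^ t • (J • (I ^ r • (⊤ : Submodule A M))) := by rw [hred]
        _ = (I ^ t * J) • (I ^ r • (⊤ : Submodule A M)) := (mulSmul _ _ _).symm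
        _ = (J * I ^ t) • (I ^ r • (⊤ : Submodule A M)) := by rw [mul_comm]
        _ = J • (I ^ t • (I ^ r • (⊤ : Submodule A M))) := mulSmul _ _ _
        _ = J • ((I ^ t * I ^ r) • (⊤ : Submodule A M)) := by rw [mulSmul]
        _ = J • (I ^ (r + t) • (⊤ : Submodule A M)) := by rw [← pow_add, add_comm t r]
        _ = J • (J ^ t • (I ^ r • (⊤ : Submodule A M))) := by rw [red_pow hred t]
        _ = (J * J ^ t) • (I ^ r • (⊤ : Submodule A M)) := (mulSmul _ _ _).symm
        _ = J ^ (t+1) • (I ^ r • (⊤ : Submodule A M)) := by rw [← pow_succ']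

lemma coe_smul_top_mem (hJI : J ≤ I) {t : ℕ}
    {w : ↥(I ^ r • (⊤ : Submodule A M))}
    (hw : w ∈ J ^ t • (⊤ : Submodule A ↥(I ^ r • (⊤ : Submodule A M)))) :
    (w : M) ∈ I ^ (r + t) • (⊤ : Submodule A M) := by
  have h1 : Submodule.map (I ^ r • (⊤ : Submodule A M)).subtype
      (J ^ t • (⊤ : Submodule A ↥(I ^ r • (⊤ : Submodule A M))))
      = J ^ t • (I ^ r • (⊤ : Submodule A M)) := by
    rw [Submodule.map_smul'', Submodule.map_top, Submodule.range_subtype]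
  have h2 : (w : M) ∈ J ^ t • (I ^ r • (⊤ : Submodule A M)) := h1 ▸ ⟨w, hw, rfl⟩
  have h3 : J ^ t • (I ^ r • (⊤ : Submodule A M)) ≤ I ^ (r + t) • (⊤ : Submodule A M) := by
    calc J ^ t • (I ^ r • (⊤ : Submodule A M)) ≤ I ^ t • (I ^ r • (⊤ : Submodule A M)) :=
          Submodule.smul_mono_left (pow_le_pow_left' hJI t)
      _ = I ^ (r + t) • (⊤ : Submodule A M) := by rw [← mulSmul, ← pow_add, add_comm]
  exact h3 h2

lemma exists_rep (hred : I ^ (r + 1) • (⊤ : Submodule A M) = J • (I ^ r • (⊤ : Submodule A M)))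
    (t : ℕ) :
    ∀ w : M, w ∈ I ^ (r + t) • (⊤ : Submodule A M) →
      ∃ P : ((↥J →₀ ℕ) →₀ ↥(I ^ r • (⊤ : Submodule A M))),
        P ∈ degSub (A := A) ↥(I ^ r • (⊤ : Submodule A M)) ↥J t ∧
        ((reesEval ↥(I ^ r • (⊤ : Submodule A M)) (fun a : ↥J => (a : A)) P :
            ↥(I ^ r • (⊤ : Submodule A M))) : M) = w := by
  induction t with
  | zero =>
      intro w hw
      rw [add_zero] at hw
      refine ⟨Finsupp.single 0 ⟨w, hw⟩, single_mem_degSub (by simp) _, ?_⟩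
      rw [reesEval_single]
      simp
  | succ t ih =>
      intro w hw
      have hrw : I ^ (r + (t+1)) • (⊤ : Submodule A M) = J • (I ^ (r + t) • (⊤ : Submodule A M)) := by
        rw [red_pow I J r hred, red_pow I J r hred, pow_succ', mulSmul]
      rw [hrw] at hw
      refine Submodule.smul_induction_on hw ?_ ?_
      · intro a ha w' hw'
        obtain ⟨P, hP, hPe⟩ := ih w' hw'
        refine ⟨shiftMap (A := A) _ (⟨a, ha⟩ : ↥J) P, shiftMap_mem_degSub hP _, ?_⟩
        rw [reesEval_shiftMap]
        simp [hPe]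
      · rintro y z ⟨P₁, hP₁, hPe₁⟩ ⟨P₂, hP₂, hPe₂⟩
        exact ⟨P₁ + P₂, Submodule.add_mem _ hP₁ hP₂, by simp [hPe₁, hPe₂]⟩

lemma exists_rep_family
    (hred : I ^ (r + 1) • (⊤ : Submodule A M) = J • (I ^ r • (⊤ : Submodule A M)))
    {s : ℕ} (x : Fin s → A) (hx : ∀ j, x j ∈ J) (t : ℕ) (i₀ : Fin s) (w : M)
    (hw : w ∈ Ideal.span (x '' {j : Fin s | j < i₀}) • (I ^ (r + t) • (⊤ : Submodule A M))) :
    ∃ P : Fin s → ((↥J →₀ ℕ) →₀ ↥(I ^ r • (⊤ : Submodule A M))),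
      (∀ j, P j ∈ degSub (A := A) ↥(I ^ r • (⊤ : Submodule A M)) ↥J t) ∧
      (∀ j, ¬ j < i₀ → P j = 0) ∧
      w = ∑ j, x j • ((reesEval ↥(I ^ r • (⊤ : Submodule A M)) (fun a : ↥J => (a : A)) (P j) :
          ↥(I ^ r • (⊤ : Submodule A M))) : M) := by
  classical
  have key : ∀ a ∈ Ideal.span (x '' {j : Fin s | j < i₀}),
      ∀ w' ∈ I ^ (r + t) • (⊤ : Submodule A M),
      ∃ P : Fin s → ((↥J →₀ ℕ) →₀ ↥(I ^ r • (⊤ : Submodule A M))),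
        (∀ j, P j ∈ degSub (A := A) ↥(I ^ r • (⊤ : Submodule A M)) ↥J t) ∧
        (∀ j, ¬ j < i₀ → P j = 0) ∧
        a • w' = ∑ j, x j • ((reesEval ↥(I ^ r • (⊤ : Submodule A M))
            (fun a : ↥J => (a : A)) (P j) : ↥(I ^ r • (⊤ : Submodule A M))) : M) := by
    intro a ha
    induction ha using Submodule.span_induction with
    | mem a hmem =>
        obtain ⟨j, hj, rfl⟩ := hmem
        intro w' hw'
        obtain ⟨P₀, hP₀, hP₀e⟩ := exists_rep I J r hred t w' hw'
        refine ⟨fun l => if l = j then P₀ else 0, ?_, ?_, ?_⟩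
        · intro l; by_cases h : l = j <;> simp [h, hP₀, Submodule.zero_mem]
        · intro l hl
          have : l ≠ j := by rintro rfl; exact hl hj
          simp [this]
        · rw [Finset.sum_eq_single_of_mem j (Finset.mem_univ j)
            (fun b _ hb => by simp [hb])]
          simp [hP₀e]
    | zero =>
        intro w' _
        exact ⟨0, fun j => Submodule.zero_mem _, fun j _ => rfl, by simp⟩
    | add a b _ _ iha ihb =>
        intro w' hw'
        obtain ⟨Pa, hPa, hPa0, hPae⟩ := iha w' hw'
        obtain ⟨Pb, hPb, hPb0, hPbe⟩ := ihb w' hw'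
        refine ⟨fun j => Pa j + Pb j, fun j => Submodule.add_mem _ (hPa j) (hPb j),
          fun j hj => by show Pa j + Pb j = 0; rw [hPa0 j hj, hPb0 j hj, add_zero], ?_⟩
        rw [add_smul, hPae, hPbe, ← Finset.sum_add_distrib]
        refine Finset.sum_congr rfl fun j _ => ?_
        simp [smul_add]
    | smul c a _ ih =>
        intro w' hw'
        obtain ⟨P, hP, hP0, hPe⟩ := ih (c • w') (Submodule.smul_mem _ c hw')
        refine ⟨P, hP, hP0, ?_⟩
        rw [← hPe, smul_eq_mul, mul_smul, smul_comm]
  refine Submodule.smul_induction_on hw (fun a ha w' hw' => key a ha w' hw') ?_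
  rintro y z ⟨Pa, hPa, hPa0, hPae⟩ ⟨Pb, hPb, hPb0, hPbe⟩
  refine ⟨fun j => Pa j + Pb j, fun j => Submodule.add_mem _ (hPa j) (hPb j),
    fun j hj => by show Pa j + Pb j = 0; rw [hPa0 j hj, hPb0 j hj, add_zero], ?_⟩
  rw [hPae, hPbe, ← Finset.sum_add_distrib]
  refine Finset.sum_congr rfl fun j _ => ?_
  simp [smul_add]

end Main
section Main2

variable {A : Type*} [CommRing A] {M : Type*} [AddCommGroup M] [Module A M]

lemma iSup_shift_le_ker {ι : Type*} (v : ι → A) (n : ℕ) :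
    (⨆ a : ι, (effKer M v n).map (shiftMap (A := A) M a)) ≤ LinearMap.ker (reesEval M v) := by
  refine iSup_le fun a => ?_
  rintro g hg
  obtain ⟨h, hh, rfl⟩ := Submodule.mem_map.mp hg
  have h1 : reesEval M v h = 0 := (Submodule.mem_inf.mp hh).1
  simp [LinearMap.mem_ker, reesEval_shiftMap, h1]

variable (I J : Ideal A) (r : ℕ)

lemma main_step {s : ℕ} (x : Fin s → A) (hx : ∀ j, x j ∈ J) (hJI : J ≤ I)
    (hred : I ^ (r + 1) • (⊤ : Submodule A M) = J • (I ^ r • (⊤ : Submodule A M)))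
    (k : ℕ)
    (hcond : ∀ n, r + k ≤ n → ∀ i : Fin s,
      Submodule.comap (LinearMap.lsmul A M (x i))
          (Ideal.span (x '' {j : Fin s | j < i}) • (I ^ n • (⊤ : Submodule A M))) ⊓
        (I ^ n • (⊤ : Submodule A M)) =
      Ideal.span (x '' {j : Fin s | j < i}) • (I ^ (n - 1) • (⊤ : Submodule A M)))
    (m : ℕ) (hm : k ≤ m + 1) :
    ∀ i : ℕ, i ≤ s → ∀ Q : Fin s → ((↥J →₀ ℕ) →₀ ↥(I ^ r • (⊤ : Submodule A M))),
      (∀ j, Q j ∈ degSub (A := A) ↥(I ^ r • (⊤ : Submodule A M)) ↥J (m + 1)) →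
      (∀ j : Fin s, i ≤ (j : ℕ) → Q j = 0) →
      reesEval ↥(I ^ r • (⊤ : Submodule A M)) (fun a : ↥J => (a : A))
        (∑ j, shiftMap (A := A) ↥(I ^ r • (⊤ : Submodule A M)) (⟨x j, hx j⟩ : ↥J) (Q j)) = 0 →
      (∑ j, shiftMap (A := A) ↥(I ^ r • (⊤ : Submodule A M)) (⟨x j, hx j⟩ : ↥J) (Q j)) ∈
        ⨆ a : ↥J, (effKer ↥(I ^ r • (⊤ : Submodule A M)) (fun a : ↥J => (a : A)) (m + 1)).map
          (shiftMap (A := A) ↥(I ^ r • (⊤ : Submodule A M)) a) := by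
  classical
  intro i
  induction i with
  | zero =>
      intro _ Q _ hQ0 _
      have hz : ∀ j : Fin s, Q j = 0 := fun j => hQ0 j (Nat.zero_le _)
      simp only [hz, map_zero, Finset.sum_const_zero]
      exact Submodule.zero_mem _
  | succ i ih =>
      intro hi1 Q hQdeg hQ0 heval
      have hi : i < s := hi1
      have heval' : ∑ j, x j • reesEval ↥(I ^ r • (⊤ : Submodule A M)) (fun a : ↥J => (a : A)) (Q j) = 0 := by
        rw [← heval, map_sum]
        exact Finset.sum_congr rfl fun j _ =>
          (reesEval_shiftMap (fun a : ↥J => (a : A)) (⟨x j, hx j⟩ : ↥J) (Q j)).symm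
      have hkey : x (⟨i, hi⟩ : Fin s) • reesEval ↥(I ^ r • (⊤ : Submodule A M)) (fun a : ↥J => (a : A)) (Q ⟨i, hi⟩) =
          - ∑ j ∈ Finset.univ.erase (⟨i, hi⟩ : Fin s), x j • reesEval ↥(I ^ r • (⊤ : Submodule A M)) (fun a : ↥J => (a : A)) (Q j) := by
        rw [← Finset.add_sum_erase _ _ (Finset.mem_univ (⟨i, hi⟩ : Fin s))] at heval'
        exact eq_neg_of_add_eq_zero_left heval'
      have hcoe : ∀ j : Fin s, ((reesEval ↥(I ^ r • (⊤ : Submodule A M)) (fun a : ↥J => (a : A)) (Q j) : ↥(I ^ r • (⊤ : Submodule A M))) : M) ∈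
          I ^ (r + (m + 1)) • (⊤ : Submodule A M) :=
        fun j => coe_smul_top_mem I J r hJI
          (reesEval_mem_smul J (fun a : ↥J => (a : A)) (fun a => a.2) (hQdeg j))
      have hkeyM := congrArg (I ^ r • (⊤ : Submodule A M)).subtype hkey
      simp only [map_neg, map_sum, map_smul, Submodule.subtype_apply] at hkeyM
      have hmem1 : x (⟨i, hi⟩ : Fin s) • ((reesEval ↥(I ^ r • (⊤ : Submodule A M)) (fun a : ↥J => (a : A)) (Q ⟨i, hi⟩) : ↥(I ^ r • (⊤ : Submodule A M))) : M) ∈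
          Ideal.span (x '' {j : Fin s | j < (⟨i, hi⟩ : Fin s)}) •
            (I ^ (r + (m + 1)) • (⊤ : Submodule A M)) := by
        rw [hkeyM]
        refine Submodule.neg_mem _ (Submodule.sum_mem _ fun j hj => ?_)
        by_cases hji : (j : ℕ) < i
        · exact Submodule.smul_mem_smul (Ideal.subset_span ⟨j, hji, rfl⟩) (hcoe j)
        · have hji' : i + 1 ≤ (j : ℕ) := by
            rcases Nat.lt_or_ge (j : ℕ) (i + 1) with h | h
            · exact absurd (Fin.ext (by omega : (j : ℕ) = i)) (Finset.mem_erase.mp hj).1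
            · exact h
          rw [hQ0 j hji']
          simp
      have hmem2 : ((reesEval ↥(I ^ r • (⊤ : Submodule A M)) (fun a : ↥J => (a : A)) (Q ⟨i, hi⟩) : ↥(I ^ r • (⊤ : Submodule A M))) : M) ∈
          Submodule.comap (LinearMap.lsmul A M (x (⟨i, hi⟩ : Fin s)))
            (Ideal.span (x '' {j : Fin s | j < (⟨i, hi⟩ : Fin s)}) •
              (I ^ (r + (m + 1)) • (⊤ : Submodule A M))) ⊓
          (I ^ (r + (m + 1)) • (⊤ : Submodule A M)) := by
        refine Submodule.mem_inf.mpr ⟨?_, hcoe ⟨i, hi⟩⟩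
        simpa using hmem1
      rw [hcond (r + (m + 1)) (by omega) ⟨i, hi⟩] at hmem2
      rw [(by omega : r + (m + 1) - 1 = r + m)] at hmem2
      obtain ⟨P, hPdeg, hP0, hPsum⟩ :=
        exists_rep_family I J r hred x hx m ⟨i, hi⟩ _ hmem2
      have hQtdeg : Q ⟨i, hi⟩ - ∑ j, shiftMap (A := A) ↥(I ^ r • (⊤ : Submodule A M)) (⟨x j, hx j⟩ : ↥J) (P j) ∈
          degSub (A := A) ↥(I ^ r • (⊤ : Submodule A M)) ↥J (m + 1) :=
        Submodule.sub_mem _ (hQdeg ⟨i, hi⟩)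
          (Submodule.sum_mem _ fun j _ => shiftMap_mem_degSub (hPdeg j) _)
      have hQtker : reesEval ↥(I ^ r • (⊤ : Submodule A M)) (fun a : ↥J => (a : A))
          (Q ⟨i, hi⟩ - ∑ j, shiftMap (A := A) ↥(I ^ r • (⊤ : Submodule A M)) (⟨x j, hx j⟩ : ↥J) (P j)) = 0 := by
        have hc2 : ∀ j : Fin s, reesEval ↥(I ^ r • (⊤ : Submodule A M)) (fun a : ↥J => (a : A)) (shiftMap (A := A) ↥(I ^ r • (⊤ : Submodule A M)) (⟨x j, hx j⟩ : ↥J) (P j))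
            = x j • reesEval ↥(I ^ r • (⊤ : Submodule A M)) (fun a : ↥J => (a : A)) (P j) := fun j => reesEval_shiftMap (fun a : ↥J => (a : A)) _ _
        have hval : ((reesEval ↥(I ^ r • (⊤ : Submodule A M)) (fun a : ↥J => (a : A))
              (Q ⟨i, hi⟩ - ∑ j, shiftMap (A := A) ↥(I ^ r • (⊤ : Submodule A M)) (⟨x j, hx j⟩ : ↥J) (P j)) : ↥(I ^ r • (⊤ : Submodule A M))) : M) =
            ((reesEval ↥(I ^ r • (⊤ : Submodule A M)) (fun a : ↥J => (a : A)) (Q ⟨i, hi⟩) : ↥(I ^ r • (⊤ : Submodule A M))) : M) -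
              ∑ j, x j • ((reesEval ↥(I ^ r • (⊤ : Submodule A M)) (fun a : ↥J => (a : A)) (P j) : ↥(I ^ r • (⊤ : Submodule A M))) : M) := by
          rw [map_sub, map_sum, Finset.sum_congr rfl fun j _ => hc2 j]
          simp only [AddSubgroupClass.coe_sub, AddSubmonoidClass.coe_finset_sum,
            SetLike.val_smul]
        refine Subtype.ext ?_
        rw [hval, hPsum]
        simp
      have hQtS : shiftMap (A := A) ↥(I ^ r • (⊤ : Submodule A M)) (⟨x ⟨i, hi⟩, hx ⟨i, hi⟩⟩ : ↥J)
            (Q ⟨i, hi⟩ - ∑ j, shiftMap (A := A) ↥(I ^ r • (⊤ : Submodule A M)) (⟨x j, hx j⟩ : ↥J) (P j)) ∈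
          ⨆ a : ↥J, (effKer ↥(I ^ r • (⊤ : Submodule A M)) (fun a : ↥J => (a : A)) (m + 1)).map (shiftMap (A := A) ↥(I ^ r • (⊤ : Submodule A M)) a) :=
        Submodule.mem_iSup_of_mem _
          (Submodule.mem_map_of_mem (Submodule.mem_inf.mpr ⟨LinearMap.mem_ker.mpr hQtker, hQtdeg⟩))
      have hQ'deg : ∀ j : Fin s, (if (j : ℕ) < i then
            Q j + shiftMap (A := A) ↥(I ^ r • (⊤ : Submodule A M)) (⟨x ⟨i, hi⟩, hx ⟨i, hi⟩⟩ : ↥J) (P j) else 0) ∈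
          degSub (A := A) ↥(I ^ r • (⊤ : Submodule A M)) ↥J (m + 1) := by
        intro j
        by_cases h : (j : ℕ) < i
        · simp only [h, if_true]
          exact Submodule.add_mem _ (hQdeg j) (shiftMap_mem_degSub (hPdeg j) _)
        · simp only [h, if_false]
          exact Submodule.zero_mem _
      have hQ'0 : ∀ j : Fin s, i ≤ (j : ℕ) → (if (j : ℕ) < i then
            Q j + shiftMap (A := A) ↥(I ^ r • (⊤ : Submodule A M)) (⟨x ⟨i, hi⟩, hx ⟨i, hi⟩⟩ : ↥J) (P j) else 0) = 0 := by
        intro j hj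
        simp [Nat.not_lt.mpr hj]
      have hsplit : ∑ j, shiftMap (A := A) ↥(I ^ r • (⊤ : Submodule A M)) (⟨x j, hx j⟩ : ↥J) (Q j) =
          shiftMap (A := A) ↥(I ^ r • (⊤ : Submodule A M)) (⟨x ⟨i, hi⟩, hx ⟨i, hi⟩⟩ : ↥J)
            (Q ⟨i, hi⟩ - ∑ j, shiftMap (A := A) ↥(I ^ r • (⊤ : Submodule A M)) (⟨x j, hx j⟩ : ↥J) (P j)) +
          ∑ j, shiftMap (A := A) ↥(I ^ r • (⊤ : Submodule A M)) (⟨x j, hx j⟩ : ↥J) (if (j : ℕ) < i then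
            Q j + shiftMap (A := A) ↥(I ^ r • (⊤ : Submodule A M)) (⟨x ⟨i, hi⟩, hx ⟨i, hi⟩⟩ : ↥J) (P j) else 0) := by
        have e2 : ∀ j : Fin s, shiftMap (A := A) ↥(I ^ r • (⊤ : Submodule A M)) (⟨x j, hx j⟩ : ↥J) (if (j : ℕ) < i then
            Q j + shiftMap (A := A) ↥(I ^ r • (⊤ : Submodule A M)) (⟨x ⟨i, hi⟩, hx ⟨i, hi⟩⟩ : ↥J) (P j) else 0) =
            shiftMap (A := A) ↥(I ^ r • (⊤ : Submodule A M)) (⟨x j, hx j⟩ : ↥J) (Q j) +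
              shiftMap (A := A) ↥(I ^ r • (⊤ : Submodule A M)) (⟨x ⟨i, hi⟩, hx ⟨i, hi⟩⟩ : ↥J)
                (shiftMap (A := A) ↥(I ^ r • (⊤ : Submodule A M)) (⟨x j, hx j⟩ : ↥J) (P j)) -
              (if j = (⟨i, hi⟩ : Fin s) then
                shiftMap (A := A) ↥(I ^ r • (⊤ : Submodule A M)) (⟨x j, hx j⟩ : ↥J) (Q j) else 0) := by
          intro j
          by_cases h : (j : ℕ) < i
          · have hne : j ≠ (⟨i, hi⟩ : Fin s) := by
              intro hji; rw [hji] at h; simp at h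
            rw [if_pos h, if_neg hne, map_add, shiftMap_comm, sub_zero]
          · by_cases h2 : j = (⟨i, hi⟩ : Fin s)
            · have hP0' : P j = 0 := hP0 j (by rw [h2]; exact lt_irrefl _)
              rw [if_neg h, if_pos h2, hP0', map_zero, map_zero, add_zero, h2, sub_self]
            · have hj' : i + 1 ≤ (j : ℕ) := by
                have hne : (j : ℕ) ≠ i := fun hc => h2 (Fin.ext hc)
                omega
              have hQj : Q j = 0 := hQ0 j hj'
              have hPj : P j = 0 := hP0 j (by
                intro hlt
                exact h (by exact hlt))
              simp only [if_neg h, if_neg h2, hQj, hPj, map_zero, add_zero, sub_zero]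
        rw [Finset.sum_congr rfl fun j _ => e2 j, map_sub, map_sum]
        rw [Finset.sum_sub_distrib, Finset.sum_add_distrib, Finset.sum_ite_eq' Finset.univ]
        simp only [Finset.mem_univ, if_true]
        abel
      have hF' : reesEval ↥(I ^ r • (⊤ : Submodule A M)) (fun a : ↥J => (a : A)) (∑ j, shiftMap (A := A) ↥(I ^ r • (⊤ : Submodule A M)) (⟨x j, hx j⟩ : ↥J)
          (if (j : ℕ) < i then
            Q j + shiftMap (A := A) ↥(I ^ r • (⊤ : Submodule A M)) (⟨x ⟨i, hi⟩, hx ⟨i, hi⟩⟩ : ↥J) (P j) else 0)) = 0 := by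
        have h3 := heval
        rw [hsplit, map_add, reesEval_shiftMap, hQtker, smul_zero, zero_add] at h3
        exact h3
      rw [hsplit]
      exact Submodule.add_mem _ hQtS (ih (by omega) _ hQ'deg hQ'0 hF')

end Main2
section StepA

variable {A : Type*} [CommRing A] {M : Type*} [AddCommGroup M] [Module A M]
variable (I J : Ideal A) (r : ℕ)

lemma stepA {s : ℕ} (x : Fin s → A) (hx : ∀ j, x j ∈ J)
    (hJ : J = Ideal.span (Set.range x)) (m : ℕ) :
    ∀ F : ((↥J →₀ ℕ) →₀ ↥(I ^ r • (⊤ : Submodule A M))), F ∈ degSub (A := A) ↥(I ^ r • (⊤ : Submodule A M)) ↥J (m + 2) →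
    ∃ Q : Fin s → ((↥J →₀ ℕ) →₀ ↥(I ^ r • (⊤ : Submodule A M))),
      (∀ j, Q j ∈ degSub (A := A) ↥(I ^ r • (⊤ : Submodule A M)) ↥J (m + 1)) ∧
      F - ∑ j, shiftMap (A := A) ↥(I ^ r • (⊤ : Submodule A M)) (⟨x j, hx j⟩ : ↥J) (Q j) ∈
        ⨆ a : ↥J, (effKer ↥(I ^ r • (⊤ : Submodule A M)) (fun a : ↥J => (a : A)) (m + 1)).map (shiftMap (A := A) ↥(I ^ r • (⊤ : Submodule A M)) a) := by
  classical
  intro F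
  induction F using Finsupp.induction with
  | zero =>
      intro _
      refine ⟨0, fun j => Submodule.zero_mem _, ?_⟩
      simp only [Pi.zero_apply, map_zero, Finset.sum_const_zero, sub_zero]
      exact Submodule.zero_mem _
  | single_add d mval f hdf hmval ihf =>
      intro hF
      have hd_deg : (d.sum fun _ e => e) = m + 2 := by
        refine hF d (Finsupp.mem_support_iff.mpr ?_)
        rw [Finsupp.add_apply, Finsupp.single_eq_same, Finsupp.notMem_support_iff.mp hdf,
          add_zero]
        exact hmval
      have hf_deg : f ∈ degSub (A := A) ↥(I ^ r • (⊤ : Submodule A M)) ↥J (m + 2) := by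
        intro d' hd'
        refine hF d' (Finsupp.mem_support_iff.mpr ?_)
        have hne : d' ≠ d := fun h => hdf (h ▸ hd')
        rw [Finsupp.add_apply, Finsupp.single_eq_of_ne hne, zero_add]
        exact Finsupp.mem_support_iff.mp hd'
      obtain ⟨Qf, hQfdeg, hQfS⟩ := ihf hf_deg
      obtain ⟨a, d₁, hd₁, hdeg₁⟩ := exists_sub_single (t := m + 1) hd_deg
      obtain ⟨b, d₂, hd₂, hdeg₂⟩ := exists_sub_single (t := m) hdeg₁
      have haJ : (a : A) ∈ Submodule.span A (Set.range x) := by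
        have key : ∀ y : A, y ∈ J → y ∈ Submodule.span A (Set.range x) := fun y hy => by rw [hJ] at hy; exact hy
        exact key _ a.2
      obtain ⟨c, hc⟩ := (Submodule.mem_span_range_iff_exists_fun A).mp haJ
      have hkey : Finsupp.single d mval -
          ∑ j, shiftMap (A := A) ↥(I ^ r • (⊤ : Submodule A M)) (⟨x j, hx j⟩ : ↥J) (Finsupp.single d₁ (c j • mval)) =
          shiftMap (A := A) ↥(I ^ r • (⊤ : Submodule A M)) b
            (Finsupp.single (d₂ + Finsupp.single a 1) mval -
              ∑ j, shiftMap (A := A) ↥(I ^ r • (⊤ : Submodule A M)) (⟨x j, hx j⟩ : ↥J)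
                (Finsupp.single d₂ (c j • mval))) := by
        rw [map_sub, map_sum]
        congr 1
        · rw [shiftMap_single]
          congr 1
          rw [hd₁, hd₂, add_right_comm]
        · refine Finset.sum_congr rfl fun j _ => ?_
          rw [shiftMap_single, shiftMap_single, shiftMap_single]
          congr 1
          rw [hd₂, add_right_comm]
      have hg'deg : Finsupp.single (d₂ + Finsupp.single a 1) mval -
          ∑ j, shiftMap (A := A) ↥(I ^ r • (⊤ : Submodule A M)) (⟨x j, hx j⟩ : ↥J) (Finsupp.single d₂ (c j • mval)) ∈
          degSub (A := A) ↥(I ^ r • (⊤ : Submodule A M)) ↥J (m + 1) := by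
        refine Submodule.sub_mem _
          (single_mem_degSub (by rw [degree_add, degree_single, hdeg₂]) _)
          (Submodule.sum_mem _ fun j _ =>
            shiftMap_mem_degSub (single_mem_degSub hdeg₂ _) _)
      have hg'ker : reesEval ↥(I ^ r • (⊤ : Submodule A M)) (fun a : ↥J => (a : A))
          (Finsupp.single (d₂ + Finsupp.single a 1) mval -
            ∑ j, shiftMap (A := A) ↥(I ^ r • (⊤ : Submodule A M)) (⟨x j, hx j⟩ : ↥J)
              (Finsupp.single d₂ (c j • mval))) = 0 := by
        rw [map_sub, map_sum, ← shiftMap_single (A := A) a d₂ mval, reesEval_shiftMap,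
          Finset.sum_congr rfl fun j _ => reesEval_shiftMap (fun a : ↥J => (a : A)) _ _,
          reesEval_single,
          Finset.sum_congr rfl fun j _ => congrArg _ (reesEval_single (fun a : ↥J => (a : A)) d₂ (c j • mval))]
        have hj : ∀ j : Fin s, x j • ((d₂.prod fun i e => (fun a : ↥J => (a : A)) i ^ e) • (c j • mval)) =
            (c j * x j) • ((d₂.prod fun i e => (fun a : ↥J => (a : A)) i ^ e) • mval) := by
          intro j
          rw [smul_smul, smul_smul, smul_smul]
          congr 1
          ring
        rw [Finset.sum_congr rfl fun j _ => hj j, ← Finset.sum_smul]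
        have hsum : (∑ j, c j * x j) = (a : A) := by
          rw [← hc]
          exact Finset.sum_congr rfl fun j _ => (smul_eq_mul _ _).symm
        rw [hsum, sub_self]
      have hgS : Finsupp.single d mval -
          ∑ j, shiftMap (A := A) ↥(I ^ r • (⊤ : Submodule A M)) (⟨x j, hx j⟩ : ↥J) (Finsupp.single d₁ (c j • mval)) ∈
          ⨆ a : ↥J, (effKer ↥(I ^ r • (⊤ : Submodule A M)) (fun a : ↥J => (a : A)) (m + 1)).map (shiftMap (A := A) ↥(I ^ r • (⊤ : Submodule A M)) a) := by
        rw [hkey]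
        exact Submodule.mem_iSup_of_mem b (Submodule.mem_map_of_mem
          (Submodule.mem_inf.mpr ⟨LinearMap.mem_ker.mpr hg'ker, hg'deg⟩))
      refine ⟨fun j => Finsupp.single d₁ (c j • mval) + Qf j,
        fun j => Submodule.add_mem _ (single_mem_degSub hdeg₁ _) (hQfdeg j), ?_⟩
      have hsplit2 : (Finsupp.single d mval + f) -
          ∑ j, shiftMap (A := A) ↥(I ^ r • (⊤ : Submodule A M)) (⟨x j, hx j⟩ : ↥J)
            (Finsupp.single d₁ (c j • mval) + Qf j) =
          (Finsupp.single d mval -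
            ∑ j, shiftMap (A := A) ↥(I ^ r • (⊤ : Submodule A M)) (⟨x j, hx j⟩ : ↥J) (Finsupp.single d₁ (c j • mval))) +
          (f - ∑ j, shiftMap (A := A) ↥(I ^ r • (⊤ : Submodule A M)) (⟨x j, hx j⟩ : ↥J) (Qf j)) := by
        rw [Finset.sum_congr rfl fun j _ => map_add (shiftMap (A := A) ↥(I ^ r • (⊤ : Submodule A M)) (⟨x j, hx j⟩ : ↥J))
          (Finsupp.single d₁ (c j • mval)) (Qf j), Finset.sum_add_distrib]
        abel
      rw [hsplit2]
      exact Submodule.add_mem _ hgS hQfS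

end StepA

/-- If `J = (x₁,...,x_s) ⊆ I` is a reduction of `I` with respect to `M` with
reduction number `r`, and for some `k ≥ 1`, for all `n ≥ r+k` and all `i`,
`[(x₁,...,x_{i-1})IⁿM : x_i] ∩ IⁿM = (x₁,...,x_{i-1})I^{n-1}M`, then `rt(J; I^r M) ≤ k`. -/
theorem stmt17 {A : Type*} [CommRing A] (M : Type*) [AddCommGroup M] [Module A M]
    (I : Ideal A) {s : ℕ} (x : Fin s → A) (J : Ideal A) (hJ : J = Ideal.span (Set.range x))
    (hJI : J ≤ I) (r : ℕ) (hr : r = redNum J I M)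
    (hred : I ^ (r + 1) • (⊤ : Submodule A M) = J • (I ^ r • (⊤ : Submodule A M)))
    (k : ℕ) (hk : 1 ≤ k)
    (hcond : ∀ n, r + k ≤ n → ∀ i : Fin s,
      Submodule.comap (LinearMap.lsmul A M (x i))
          (Ideal.span (x '' {j : Fin s | j < i}) • (I ^ n • (⊤ : Submodule A M))) ⊓
        (I ^ n • (⊤ : Submodule A M)) =
      Ideal.span (x '' {j : Fin s | j < i}) • (I ^ (n - 1) • (⊤ : Submodule A M))) :
    relType (↥(I ^ r • (⊤ : Submodule A M))) J ≤ k := by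
  have hx : ∀ j, x j ∈ J := fun j => by rw [hJ]; exact Ideal.subset_span ⟨j, rfl⟩
  apply Nat.sInf_le
  refine ⟨hk, ?_⟩
  intro n hn
  obtain ⟨m, rfl⟩ : ∃ m, n = m + 2 := ⟨n - 2, by omega⟩
  intro F hF
  have hFker : reesEval ↥(I ^ r • (⊤ : Submodule A M)) (fun a : ↥J => (a : A)) F = 0 := (Submodule.mem_inf.mp hF).1
  have hFdeg : F ∈ degSub (A := A) ↥(I ^ r • (⊤ : Submodule A M)) ↥J (m + 2) := (Submodule.mem_inf.mp hF).2
  obtain ⟨Q, hQdeg, hQS⟩ := stepA I J r x hx hJ m F hFdeg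
  have hGker : reesEval ↥(I ^ r • (⊤ : Submodule A M)) (fun a : ↥J => (a : A))
      (∑ j, shiftMap (A := A) ↥(I ^ r • (⊤ : Submodule A M)) (⟨x j, hx j⟩ : ↥J) (Q j)) = 0 := by
    have h2 := LinearMap.mem_ker.mp
      (iSup_shift_le_ker (fun a : ↥J => (a : A)) (m + 1) hQS)
    rw [map_sub, hFker, zero_sub, neg_eq_zero] at h2
    exact h2
  have hmain := main_step I J r x hx hJI hred k hcond m (by omega) s le_rfl Q hQdeg
    (fun j hj => absurd j.2 (Nat.not_lt.mpr hj)) hGker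
  have hrw : F = (F - ∑ j, shiftMap (A := A) ↥(I ^ r • (⊤ : Submodule A M)) (⟨x j, hx j⟩ : ↥J) (Q j)) +
      ∑ j, shiftMap (A := A) ↥(I ^ r • (⊤ : Submodule A M)) (⟨x j, hx j⟩ : ↥J) (Q j) := by abel
  rw [hrw]
  exact Submodule.add_mem _ hQS hmain
end

section
/- Let A be a noetherian ring containing ℚ with finite integral degree d = d_A(Ā), let N ⊆ M be finitely generated A-modules, and let I be a regular ideal of A having a principal reduction (x) where x is a d-sequence with respect to M/N. Then for every n ≥ d, IⁿM ∩ N = I^{n-d}(I^d M ∩ N). -/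
open Finset Pointwise Polynomial



private lemma signsum {n : ℕ} (R : Finset (Fin n)) :
    (∑ T ∈ (univ : Finset (Fin n)).powerset.filter (fun T => R ⊆ T), (-1 : ℤ) ^ T.card)
      = if R = univ then (-1 : ℤ) ^ n else 0 := by
  classical
  have key : (∑ T ∈ (univ : Finset (Fin n)).powerset.filter (fun T => R ⊆ T), (-1 : ℤ) ^ T.card)
      = ∑ U ∈ Rᶜ.powerset, (-1 : ℤ) ^ R.card * (-1 : ℤ) ^ U.card := by
    refine Finset.sum_nbij' (fun T => T \ R) (fun U => R ∪ U) ?_ ?_ ?_ ?_ ?_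
    · intro T hT
      simp only [mem_filter, mem_powerset] at hT
      simp only [mem_powerset]
      intro a ha
      simp only [mem_sdiff] at ha
      simp [mem_compl, ha.2]
    · intro U hU
      simp only [mem_powerset] at hU
      simp only [mem_filter, mem_powerset]
      exact ⟨subset_univ _, subset_union_left⟩
    · intro T hT
      simp only [mem_filter, mem_powerset] at hT
      exact Finset.union_sdiff_of_subset hT.2
    · intro U hU
      simp only [mem_powerset] at hU
      refine Finset.union_sdiff_cancel_left ?_
      refine Finset.disjoint_left.mpr fun a haR haU => ?_
      have := hU haU
      simp only [mem_compl] at this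
      exact this haR
    · intro T hT
      simp only [mem_filter, mem_powerset] at hT
      show (-1 : ℤ) ^ T.card = (-1 : ℤ) ^ R.card * (-1 : ℤ) ^ (T \ R).card
      rw [← pow_add]
      congr 1
      have := Finset.card_sdiff_add_card_eq_card hT.2
      omega
  rw [key, ← Finset.mul_sum, Finset.sum_powerset_neg_one_pow_card]
  by_cases h : R = univ
  · subst h
    simp [Finset.card_univ]
  · rw [if_neg h, if_neg]
    · ring
    · intro hc
      apply h
      rwa [Finset.compl_eq_empty_iff] at hc

private lemma pol_identity {A : Type*} [CommRing A] (n : ℕ) (f : Fin n → A) :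
    ∑ T ∈ (Finset.univ : Finset (Fin n)).powerset, (-1 : ℤ) ^ T.card • (∑ i ∈ T, f i) ^ n
      = ((-1 : ℤ) ^ n * (Nat.factorial n : ℤ)) • ∏ i, f i := by
  classical
  have h2 : ∀ T : Finset (Fin n), Fintype.piFinset (fun _ : Fin n => T)
      = Finset.univ.filter (fun p : Fin n → Fin n => ∀ i, p i ∈ T) := by
    intro T; ext p; simp [Fintype.mem_piFinset]
  calc ∑ T ∈ (univ : Finset (Fin n)).powerset, (-1 : ℤ) ^ T.card • (∑ i ∈ T, f i) ^ n
      = ∑ T ∈ (univ : Finset (Fin n)).powerset, ∑ p ∈ (univ : Finset (Fin n → Fin n)),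
          (if ∀ i, p i ∈ T then (-1 : ℤ) ^ T.card • ∏ i, f (p i) else 0) := by
        refine Finset.sum_congr rfl fun T _ => ?_
        rw [Finset.sum_pow' T f n, h2, Finset.smul_sum, Finset.sum_filter]
    _ = ∑ p ∈ (univ : Finset (Fin n → Fin n)), ∑ T ∈ (univ : Finset (Fin n)).powerset,
          (if ∀ i, p i ∈ T then (-1 : ℤ) ^ T.card • ∏ i, f (p i) else 0) := Finset.sum_comm
    _ = ∑ p ∈ (univ : Finset (Fin n → Fin n)),
          (if Finset.image p univ = univ then (-1 : ℤ) ^ n else 0) • ∏ i, f (p i) := by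
        refine Finset.sum_congr rfl fun p _ => ?_
        have hcond : ∀ T : Finset (Fin n), (∀ i, p i ∈ T) ↔ Finset.image p univ ⊆ T := by
          intro T
          rw [Finset.image_subset_iff]
          simp
        calc ∑ T ∈ (univ : Finset (Fin n)).powerset,
              (if ∀ i, p i ∈ T then (-1 : ℤ) ^ T.card • ∏ i, f (p i) else 0)
            = ∑ T ∈ (univ : Finset (Fin n)).powerset.filter
                (fun T => Finset.image p univ ⊆ T), (-1 : ℤ) ^ T.card • ∏ i, f (p i) := by
              rw [Finset.sum_filter]
              exact Finset.sum_congr rfl fun T _ => by simp_rw [hcond]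
          _ = (∑ T ∈ (univ : Finset (Fin n)).powerset.filter
                (fun T => Finset.image p univ ⊆ T), (-1 : ℤ) ^ T.card) • ∏ i, f (p i) := by
              rw [Finset.sum_smul]
          _ = _ := by rw [signsum]
    _ = ∑ p ∈ (univ : Finset (Fin n → Fin n)).filter (fun p => Function.Bijective p),
          (-1 : ℤ) ^ n • ∏ i, f (p i) := by
        rw [Finset.sum_filter]
        refine Finset.sum_congr rfl fun p _ => ?_
        have : Finset.image p univ = univ ↔ Function.Bijective p := by
          constructor
          · intro h
            refine Finite.surjective_iff_bijective.mp ?_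
            intro y
            have hy : y ∈ Finset.image p univ := by rw [h]; exact Finset.mem_univ y
            obtain ⟨i, _, hi⟩ := Finset.mem_image.mp hy
            exact ⟨i, hi⟩
          · intro h
            apply Finset.eq_univ_of_card
            rw [Finset.card_image_of_injective _ h.1, Finset.card_univ]
        rw [if_congr this rfl rfl]
        split <;> simp
    _ = ∑ σ : Equiv.Perm (Fin n), (-1 : ℤ) ^ n • ∏ i, f (σ i) := by
        refine Finset.sum_bij' (fun p hp => Equiv.ofBijective p (Finset.mem_filter.mp hp).2)
          (fun σ _ => ⇑σ) ?_ ?_ ?_ ?_ ?_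
        · intros; exact Finset.mem_univ _
        · intro σ _
          exact Finset.mem_filter.mpr ⟨Finset.mem_univ _, σ.bijective⟩
        · intro p hp; rfl
        · intro σ _
          exact Equiv.coe_fn_injective rfl
        · intro p hp; rfl
    _ = ((-1 : ℤ) ^ n * (Nat.factorial n : ℤ)) • ∏ i, f i := by
        rw [Finset.sum_congr rfl (fun σ _ => by rw [Equiv.prod_comp σ f]),
          Finset.sum_const, Finset.card_univ, Fintype.card_perm, Fintype.card_fin,
          ← Nat.cast_smul_eq_nsmul ℤ, smul_smul, mul_comm]



private lemma pow_le_span_pows {A : Type*} [CommRing A] [Algebra ℚ A] (I : Ideal A) (n : ℕ) :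
    I ^ n ≤ Ideal.span {y | ∃ a ∈ I, y = a ^ n} := by
  classical
  set P := Ideal.span {y | ∃ a ∈ I, y = a ^ n} with hP
  intro y hy
  rw [Submodule.pow_eq_span_pow_set] at hy
  refine Submodule.span_le.mpr ?_ hy
  rintro z hz
  rw [Set.mem_pow] at hz
  obtain ⟨g, rfl⟩ := hz
  rw [List.prod_ofFn]
  -- now show ∏ i, (g i : A) ∈ P
  set f : Fin n → A := fun i => (g i : A) with hf
  have hfI : ∀ i, f i ∈ I := fun i => (g i).2
  have key := pol_identity n f
  have hsum : ((-1 : ℤ) ^ n * (Nat.factorial n : ℤ)) • ∏ i, f i ∈ P := by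
    rw [← key]
    refine Submodule.sum_mem _ fun T _ => ?_
    rw [zsmul_eq_mul]
    exact Ideal.mul_mem_left _ _
      (Ideal.subset_span ⟨∑ i ∈ T, f i, Ideal.sum_mem _ fun i _ => hfI i, rfl⟩)
  have hc : ((-1 : ℚ) ^ n * (Nat.factorial n : ℚ)) ≠ 0 := by
    apply mul_ne_zero
    · exact pow_ne_zero _ (by norm_num)
    · exact_mod_cast Nat.factorial_ne_zero n
  have hcast : ((-1 : ℤ) ^ n * (Nat.factorial n : ℤ)) • ∏ i, f i
      = algebraMap ℚ A ((-1 : ℚ) ^ n * (Nat.factorial n : ℚ)) * ∏ i, f i := by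
    rw [zsmul_eq_mul]
    congr 1
    rw [map_mul, map_pow, map_neg, map_one, map_natCast]
    push_cast
    ring
  have : (∏ i, f i) = algebraMap ℚ A ((-1 : ℚ) ^ n * (Nat.factorial n : ℚ))⁻¹ *
      (((-1 : ℤ) ^ n * (Nat.factorial n : ℤ)) • ∏ i, f i) := by
    rw [hcast, ← mul_assoc, ← map_mul, inv_mul_cancel₀ hc, map_one, one_mul]
  rw [this]
  exact Ideal.mul_mem_left _ _ hsum


private lemma isIntegral_mk' {A : Type*} [CommRing A] [IsNoetherianRing A]
    (I : Ideal A) (x : A) (hx : x ∈ nonZeroDivisors A) (m : ℕ)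
    (hred : I ^ (m + 1) = Ideal.span {x} * I ^ m)
    (z : A) (hzI : z ∈ I) (hz : z ∈ nonZeroDivisors A)
    (a : A) (ha : a ∈ I) :
    IsIntegral A (IsLocalization.mk' (FractionRing A) a (⟨x, hx⟩ : nonZeroDivisors A)) := by
  set K := FractionRing A
  set b : K := IsLocalization.mk' K a (⟨x, hx⟩ : nonZeroDivisors A) with hb
  have hbx : b * algebraMap A K x = algebraMap A K a :=
    IsLocalization.mk'_spec K a (⟨x, hx⟩ : nonZeroDivisors A)
  have hxu : IsUnit (algebraMap A K x) := IsLocalization.map_units K (⟨x, hx⟩ : nonZeroDivisors A)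
  set C : Submodule A K := Submodule.map (Algebra.linearMap A K) (I ^ m : Ideal A) with hC
  have hCfg : C.FG := Submodule.FG.map _ (IsNoetherian.noetherian (I ^ m : Ideal A))
  haveI : Module.Finite A C := Module.Finite.iff_fg.mpr hCfg
  have hmul : ∀ c ∈ C, b * c ∈ C := by
    rintro _ ⟨t, ht, rfl⟩
    have h1 : t * a ∈ Ideal.span {x} * I ^ m := by
      rw [← hred, pow_succ]
      exact Ideal.mul_mem_mul ht ha
    obtain ⟨u, hu, hxu'⟩ := Ideal.mem_span_singleton_mul.mp h1
    refine ⟨u, hu, ?_⟩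
    apply hxu.mul_left_cancel
    show algebraMap A K x * Algebra.linearMap A K u = _
    simp only [Algebra.linearMap_apply]
    rw [← map_mul, hxu', map_mul, ← hbx]
    ring
  let φ : Module.End A C :=
    { toFun := fun c => ⟨b * c, hmul _ c.2⟩
      map_add' := fun c₁ c₂ => Subtype.ext (by simp [mul_add])
      map_smul' := fun r c => Subtype.ext (by simp [Algebra.mul_smul_comm]) }
  have hφpow : ∀ (k : ℕ) (c : C), (((φ ^ k) c : C) : K) = b ^ k * c := by
    intro k
    induction k with
    | zero => intro c; simp
    | succ k ih =>
      intro c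
      rw [pow_succ, Module.End.mul_apply, ih (φ c)]
      show b ^ k * (b * (c : K)) = b ^ (k + 1) * c
      ring
  obtain ⟨p, hpm, hpz⟩ := LinearMap.exists_monic_and_aeval_eq_zero A φ
  have heval : ∀ (q : A[X]) (c : C), (((Polynomial.aeval φ q) c : C) : K)
      = Polynomial.aeval b q * c := by
    intro q
    induction q using Polynomial.induction_on' with
    | add r s hr hs =>
      intro c
      simp only [map_add, LinearMap.add_apply, Submodule.coe_add, hr c, hs c, add_mul]
    | monomial n r =>
      intro c
      rw [Polynomial.aeval_monomial, Polynomial.aeval_monomial]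
      show ((algebraMap A (Module.End A C) r * φ ^ n) c : K) = _
      rw [Module.End.mul_apply]
      have : (algebraMap A (Module.End A C) r) ((φ ^ n) c) = r • ((φ ^ n) c) := by
        simp [Module.algebraMap_end_apply]
      rw [this]
      push_cast [Submodule.coe_smul]
      rw [hφpow n c, Algebra.smul_def]
      ring
  have hz' : (z ^ m : A) ∈ nonZeroDivisors A := pow_mem hz m
  have hcz : algebraMap A K (z ^ m) ∈ C := ⟨z ^ m, Ideal.pow_mem_pow hzI m, rfl⟩
  have h0 : Polynomial.aeval b p * algebraMap A K (z ^ m) = 0 := by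
    have := heval p ⟨algebraMap A K (z ^ m), hcz⟩
    rw [hpz] at this
    simpa using this.symm
  have hzu : IsUnit (algebraMap A K (z ^ m)) :=
    IsLocalization.map_units K (⟨z ^ m, hz'⟩ : nonZeroDivisors A)
  exact ⟨p, hpm, by rwa [IsUnit.mul_left_eq_zero hzu] at h0⟩


private lemma powd_mem {A : Type*} [CommRing A] [IsNoetherianRing A] [Nontrivial A]
    (d : ℕ) (hd1 : 1 ≤ d)
    (hd : ∀ b : FractionRing A, IsIntegral A b →
      ∃ p : Polynomial A, p.Monic ∧ p.natDegree ≤ d ∧ Polynomial.aeval b p = 0)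
    (I : Ideal A) (x : A) (hx : x ∈ nonZeroDivisors A) (hxI : x ∈ I) (m : ℕ)
    (hred : I ^ (m + 1) = Ideal.span {x} * I ^ m)
    (z : A) (hzI : z ∈ I) (hz : z ∈ nonZeroDivisors A)
    (a : A) (ha : a ∈ I) : a ^ d ∈ Ideal.span {x} * I ^ (d - 1) := by
  classical
  set K := FractionRing A
  set b : K := IsLocalization.mk' K a (⟨x, hx⟩ : nonZeroDivisors A) with hbdef
  have hint : IsIntegral A b := isIntegral_mk' I x hx m hred z hzI hz a ha
  obtain ⟨p, hpm, hdeg, hpz⟩ := hd b hint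
  set e := p.natDegree with he
  have hinj : Function.Injective (algebraMap A K) := IsFractionRing.injective A K
  have he1 : 1 ≤ e := by
    by_contra h
    have he0 : e = 0 := by omega
    have : p = 1 := hpm.natDegree_eq_zero.mp he0
    rw [this] at hpz
    rw [map_one] at hpz
    have : (1 : A) = 0 := hinj (by simpa using hpz)
    exact one_ne_zero this
  have hbx : b * algebraMap A K x = algebraMap A K a :=
    IsLocalization.mk'_spec K a (⟨x, hx⟩ : nonZeroDivisors A)
  -- the integral equation multiplied by x^e
  have hsumK : algebraMap A K (∑ i ∈ Finset.range (e + 1),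
      p.coeff i * (a ^ i * x ^ (e - i))) = 0 := by
    have h1 : (∑ i ∈ Finset.range (e + 1), p.coeff i • b ^ i) = 0 := by
      rw [← Polynomial.aeval_eq_sum_range, hpz]
    have h2 : (∑ i ∈ Finset.range (e + 1), p.coeff i • b ^ i) * (algebraMap A K x) ^ e = 0 := by
      rw [h1, zero_mul]
    rw [Finset.sum_mul] at h2
    rw [map_sum]
    rw [← h2]
    refine Finset.sum_congr rfl fun i hi => ?_
    have hie : i ≤ e := by
      have := Finset.mem_range.mp hi; omega
    have hxe : (algebraMap A K x) ^ e = (algebraMap A K x) ^ i * (algebraMap A K x) ^ (e - i) := by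
      rw [← pow_add]
      congr 1
      omega
    calc algebraMap A K (p.coeff i * (a ^ i * x ^ (e - i)))
        = algebraMap A K (p.coeff i) * ((algebraMap A K a) ^ i * (algebraMap A K x) ^ (e - i)) := by
          rw [map_mul, map_mul, map_pow, map_pow]
      _ = algebraMap A K (p.coeff i) * ((b * algebraMap A K x) ^ i
            * (algebraMap A K x) ^ (e - i)) := by rw [hbx]
      _ = p.coeff i • (b ^ i * ((algebraMap A K x) ^ i * (algebraMap A K x) ^ (e - i))) := by
          rw [Algebra.smul_def, mul_pow]; ring
      _ = p.coeff i • b ^ i * (algebraMap A K x) ^ e := by rw [← hxe, smul_mul_assoc]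
  have hsumA : (∑ i ∈ Finset.range (e + 1), p.coeff i * (a ^ i * x ^ (e - i))) = 0 :=
    hinj (by rw [hsumK, map_zero])
  have htop : p.coeff e * (a ^ e * x ^ (e - e)) = a ^ e := by
    rw [hpm.coeff_natDegree]
    simp
  have hae : a ^ e = -∑ i ∈ Finset.range e, p.coeff i * (a ^ i * x ^ (e - i)) := by
    rw [Finset.sum_range_succ, htop] at hsumA
    linear_combination hsumA
  have haeMem : a ^ e ∈ Ideal.span {x} * I ^ (e - 1) := by
    rw [hae]
    refine Submodule.neg_mem _ (Submodule.sum_mem _ fun i hi => ?_)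
    have hie : i < e := Finset.mem_range.mp hi
    refine Ideal.mem_span_singleton_mul.mpr
      ⟨p.coeff i * (a ^ i * x ^ (e - 1 - i)), ?_, ?_⟩
    · refine Ideal.mul_mem_left _ _ ?_
      have h3 : a ^ i * x ^ (e - 1 - i) ∈ I ^ i * I ^ (e - 1 - i) :=
        Ideal.mul_mem_mul (Ideal.pow_mem_pow ha i) (Ideal.pow_mem_pow hxI (e - 1 - i))
      rw [← pow_add] at h3
      have : i + (e - 1 - i) = e - 1 := by omega
      rwa [this] at h3
    · have hei : e - i = (e - 1 - i) + 1 := by omega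
      rw [hei, pow_succ]
      ring
  obtain ⟨w, hw, hxw⟩ := Ideal.mem_span_singleton_mul.mp haeMem
  refine Ideal.mem_span_singleton_mul.mpr ⟨a ^ (d - e) * w, ?_, ?_⟩
  · have h3 : a ^ (d - e) * w ∈ I ^ (d - e) * I ^ (e - 1) :=
      Ideal.mul_mem_mul (Ideal.pow_mem_pow ha (d - e)) hw
    rw [← pow_add] at h3
    have : d - e + (e - 1) = d - 1 := by omega
    rwa [this] at h3
  · have : a ^ d = a ^ (d - e) * a ^ e := by
      rw [← pow_add]
      congr 1
      omega
    rw [this, ← hxw]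
    ring

/-- Let `A` be a noetherian ring containing ℚ with finite integral degree
`d = d_A(Ā)`, `N ⊆ M` finitely generated `A`-modules, and `I` a regular ideal having a
principal reduction `(x)` where `x` is a d-sequence with respect to `M/N` (i.e.
`(0 : x²) = (0 : x)` on `M/N`). Then for every `n ≥ d`, `IⁿM ∩ N = I^{n-d}(I^d M ∩ N)`. -/
theorem stmt18 {A : Type*} [CommRing A] [IsNoetherianRing A] [Algebra ℚ A]
    {M : Type*} [AddCommGroup M] [Module A M] [Module.Finite A M]
    (d : ℕ) (hd1 : 1 ≤ d)
    (hd : ∀ b : FractionRing A, IsIntegral A b →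
      ∃ p : Polynomial A, p.Monic ∧ p.natDegree ≤ d ∧ Polynomial.aeval b p = 0)
    (N : Submodule A M) (I : Ideal A) (hIreg : ∃ z ∈ I, z ∈ nonZeroDivisors A)
    (x : A) (hxI : x ∈ I) (hred : ∃ m : ℕ, I ^ (m + 1) = Ideal.span {x} * I ^ m)
    (hds : ∀ p : M ⧸ N, x • x • p = 0 → x • p = 0) :
    ∀ n, d ≤ n →
      (I ^ n • ⊤ : Submodule A M) ⊓ N = I ^ (n - d) • ((I ^ d • ⊤ : Submodule A M) ⊓ N) := by
  intro n hn
  rcases subsingleton_or_nontrivial A with hA | hA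
  · haveI := Module.subsingleton A M
    ext u
    have hu0 : u = 0 := Subsingleton.elim u 0
    subst hu0
    simp
  obtain ⟨m, hm⟩ := hred
  obtain ⟨z, hzI, hz⟩ := hIreg
  -- x is a nonzerodivisor
  have hxnz : x ∈ nonZeroDivisors A := by
    have h1 : z ^ (m + 1) ∈ I ^ (m + 1) := Ideal.pow_mem_pow hzI (m + 1)
    rw [hm] at h1
    have h2 : z ^ (m + 1) ∈ Ideal.span {x} :=
      (Ideal.mul_le_left : Ideal.span {x} * I ^ m ≤ Ideal.span {x}) h1
    obtain ⟨t, ht⟩ := Ideal.mem_span_singleton'.mp h2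
    have h3 : t * x ∈ nonZeroDivisors A := by rw [ht]; exact pow_mem hz (m + 1)
    exact (mul_mem_nonZeroDivisors.mp h3).2
  -- reduction number bound : I^d = (x) I^(d-1)
  have hId : I ^ d = Ideal.span {x} * I ^ (d - 1) := by
    refine le_antisymm ?_ ?_
    · refine le_trans (pow_le_span_pows I d) (Ideal.span_le.mpr ?_)
      rintro y ⟨a, haI, rfl⟩
      exact powd_mem d hd1 hd I x hxnz hxI m hm z hzI hz a haI
    · have h4 : Ideal.span {x} * I ^ (d - 1) ≤ I * I ^ (d - 1) :=
        Ideal.mul_mono (Ideal.span_le.mpr (Set.singleton_subset_iff.mpr hxI)) le_rfl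
      have h5 : I * I ^ (d - 1) = I ^ d := by
        rw [← pow_succ']
        congr 1
        omega
      rwa [h5] at h4
  have hpow : ∀ k, I ^ (d + k) = Ideal.span {x} ^ (k + 1) * I ^ (d - 1) := by
    intro k
    induction k with
    | zero => simpa using hId
    | succ k ih =>
      have : I ^ (d + (k + 1)) = I ^ (d + k) * I := by
        rw [show d + (k + 1) = (d + k) + 1 from rfl, pow_succ]
      rw [this, ih, mul_assoc, mul_comm (I ^ (d - 1)) I, ← pow_succ' I (d-1)]
      have h5 : I ^ (d - 1 + 1) = I ^ d := by congr 1; omega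
      rw [h5, hId, ← mul_assoc, ← pow_succ]
  -- iterated d-sequence property
  have hxk : ∀ (j : ℕ) (p : M ⧸ N), x ^ (j + 1) • p = 0 → x • p = 0 := by
    intro j
    induction j with
    | zero => intro p h; simpa using h
    | succ j ih =>
      intro p h
      refine hds p (ih (x • p) ?_)
      rw [smul_smul, ← pow_succ]
      exact h
  set k := n - d with hk
  have hnk : n = d + k := by omega
  refine le_antisymm ?_ ?_
  · -- forward inclusion
    intro u hu
    obtain ⟨hu1, hu2⟩ := Submodule.mem_inf.mp hu
    have h6 : u ∈ (Ideal.span {x ^ (k + 1)} * I ^ (d - 1)) • (⊤ : Submodule A M) := by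
      rw [← Ideal.span_singleton_pow, ← hpow k, ← hnk]
      exact hu1
    rw [← Ideal.smul_eq_mul, Submodule.smul_assoc, Submodule.ideal_span_singleton_smul] at h6
    rw [← SetLike.mem_coe, Submodule.coe_pointwise_smul] at h6
    obtain ⟨w, hw, hwu0⟩ := h6
    have hwu : x ^ (k + 1) • w = u := hwu0
    have hquw : x ^ (k + 1) • (Submodule.Quotient.mk w : M ⧸ N) = 0 := by
      rw [← Submodule.Quotient.mk_smul, hwu]
      exact (Submodule.Quotient.mk_eq_zero N).mpr hu2
    have hxwN : x • w ∈ N := by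
      rw [← Submodule.Quotient.mk_eq_zero N, Submodule.Quotient.mk_smul]
      exact hxk k _ hquw
    have hxwI : x • w ∈ (I ^ d • ⊤ : Submodule A M) := by
      have h7 : x • w ∈ x • (I ^ (d - 1) • (⊤ : Submodule A M)) :=
        Submodule.smul_mem_pointwise_smul w x _ hw
      rw [← Submodule.ideal_span_singleton_smul, ← Submodule.smul_assoc,
        Ideal.smul_eq_mul, ← hId] at h7
      exact h7
    have hu' : u = x ^ k • (x • w) := by
      rw [smul_smul, ← pow_succ, hwu]
    have h9 : x ^ k • (x • w) ∈ x ^ k • ((I ^ d • ⊤ : Submodule A M) ⊓ N) :=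
      Submodule.smul_mem_pointwise_smul _ _ _ (Submodule.mem_inf.mpr ⟨hxwI, hxwN⟩)
    rw [← Submodule.ideal_span_singleton_smul] at h9
    have h10 : Ideal.span {x ^ k} ≤ I ^ k :=
      Ideal.span_le.mpr (Set.singleton_subset_iff.mpr (Ideal.pow_mem_pow hxI k))
    rw [hu']
    exact Submodule.smul_mono_left h10 h9
  · -- reverse inclusion
    refine le_inf ?_ ?_
    · have h11 : I ^ k • ((I ^ d • ⊤ : Submodule A M) ⊓ N) ≤ I ^ k • (I ^ d • ⊤ : Submodule A M) :=
        Submodule.smul_mono le_rfl inf_le_left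
      refine le_trans h11 ?_
      rw [← Submodule.smul_assoc]
      have h12 : (I ^ k • I ^ d : Ideal A) = I ^ n := by
        rw [Ideal.smul_eq_mul, ← pow_add]
        congr 1
        omega
      rw [h12]
    · exact le_trans (Submodule.smul_mono le_rfl inf_le_right) Submodule.smul_le_right
end
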